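/- arXiv:2306.02649 — 7 statements merged into one kernel-verified Lean document; each statement's English description precedes it below -/
import Mathlib

section
/- Circle inversion with respect to a circle centered at m maps a circle passing through m (with the point m removed) onto a line not passing through m. -/
open EuclideanGeometry AffineSubspace

/-- Circle inversion with respect to the circle with center `m` and radius `r`. -/
noncomputable def circleInversion (m : EuclideanSpace ℝ (Fin 2)) (r : ℝ)
    (p : EuclideanSpace ℝ (Fin 2)) : EuclideanSpace ℝ (Fin 2) :=
  m + (r ^ 2 / dist p m ^ 2) • (p - m)

lemma circle_iff (p m m' : EuclideanSpace ℝ (Fin 2)) :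
    dist p m' = dist m m' ↔ ‖p - m‖ ^ 2 = 2 * inner (𝕜 := ℝ) (p - m) (m' - m) := by
  rw [show (dist p m' = dist m m') ↔ dist p m' ^ 2 = dist m m' ^ 2 from
    ⟨fun h => by rw [h], fun h => by
      have h1 : dist p m' = Real.sqrt (dist p m' ^ 2) := (Real.sqrt_sq dist_nonneg).symm
      rw [h1, h, Real.sqrt_sq dist_nonneg]⟩]
  rw [dist_eq_norm, dist_eq_norm, show p - m' = (p - m) - (m' - m) by abel,
    show m - m' = -(m' - m) by abel, norm_neg]
  rw [norm_sub_sq_real]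
  constructor <;> intro h <;> nlinarith [h]

/-- Circle inversion with center `m` maps a circle passing through `m` (with the point `m`
removed) onto a line not passing through `m`. -/
theorem circleInversion_image_circle_through_center (m : EuclideanSpace ℝ (Fin 2)) (r : ℝ)
    (hr : 0 < r) (m' : EuclideanSpace ℝ (Fin 2)) (ρ : ℝ) (hρ : 0 < ρ)
    (hm : dist m m' = ρ) :
    ∃ L : AffineSubspace ℝ (EuclideanSpace ℝ (Fin 2)),
      Module.finrank ℝ L.direction = 1 ∧ m ∉ L ∧
      circleInversion m r '' ({p | dist p m' = ρ} \ {m}) = (L : Set (EuclideanSpace ℝ (Fin 2))) := by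
  set n : EuclideanSpace ℝ (Fin 2) := m' - m with hn
  have hnρ : ‖n‖ = ρ := by rw [hn, ← hm, dist_eq_norm, show m - m' = -(m' - m) by abel, norm_neg]
  have hn0 : n ≠ 0 := by intro h; rw [h, norm_zero] at hnρ; linarith
  set a : EuclideanSpace ℝ (Fin 2) := m + (r ^ 2 / ρ ^ 2) • n with ha
  have ham : a - m = (r ^ 2 / ρ ^ 2) • n := by rw [ha]; abel
  have ham0 : a - m ≠ 0 := by
    rw [ham]; exact smul_ne_zero (by positivity) hn0
  have hane : m ≠ a := fun h => ham0 (by rw [← h]; abel)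
  have hdma : dist m a = r ^ 2 / ρ := by
    rw [dist_eq_norm, show m - a = -(a - m) by abel, norm_neg, ham, norm_smul,
      Real.norm_eq_abs, abs_of_pos (by positivity), hnρ]
    field_simp
  -- membership in perpBisector m a
  have hmem : ∀ q : EuclideanSpace ℝ (Fin 2),
      q ∈ perpBisector m a ↔ inner (𝕜 := ℝ) (q - m) n = r ^ 2 / 2 := by
    intro q
    rw [mem_perpBisector_iff_inner_eq, hdma]
    have : (q -ᵥ m : EuclideanSpace ℝ (Fin 2)) = q - m := rfl
    rw [this, show (a -ᵥ m : EuclideanSpace ℝ (Fin 2)) = a - m from rfl, ham,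
      real_inner_smul_right]
    set I : ℝ := inner ℝ (q - m) n with hI
    constructor <;> intro h
    · have hne : (r ^ 2 / ρ ^ 2 : ℝ) ≠ 0 := by positivity
      refine mul_left_cancel₀ hne ?_
      rw [h]; field_simp
    · rw [h]; field_simp
  refine ⟨perpBisector m a, ?_, ?_, ?_⟩
  · rw [direction_perpBisector]
    have h1 : Module.finrank ℝ (ℝ ∙ (a -ᵥ m)) = 1 := finrank_span_singleton ham0
    have := Submodule.finrank_add_finrank_orthogonal (K := (ℝ ∙ (a -ᵥ m)))
    rw [h1, finrank_euclideanSpace_fin] at this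
    omega
  · rw [← SetLike.mem_coe] at *
    intro h
    have := (hmem m).mp h
    simp only [sub_self, inner_zero_left] at this
    nlinarith
  · ext q
    simp only [Set.mem_image, Set.mem_diff, Set.mem_setOf_eq, Set.mem_singleton_iff,
      SetLike.mem_coe]
    constructor
    · rintro ⟨p, ⟨hp, hpm⟩, rfl⟩
      have hd : dist p m ≠ 0 := fun h => hpm (by rwa [dist_eq_zero] at h)
      have hcirc : ‖p - m‖ ^ 2 = 2 * inner (𝕜 := ℝ) (p - m) n := by
        rw [hn, ← circle_iff, hm]; exact hp
      rw [hmem]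
      have : circleInversion m r p - m = (r ^ 2 / dist p m ^ 2) • (p - m) := by
        rw [circleInversion]; abel
      rw [this, real_inner_smul_left]
      rw [dist_eq_norm] at hd ⊢
      set I : ℝ := inner ℝ (p - m) n with hI
      have hIne : I ≠ 0 := by
        intro h0; rw [h0, mul_zero] at hcirc
        exact hd (by nlinarith [norm_nonneg (p - m), hcirc])
      rw [hcirc]
      field_simp
    · intro hq
      rw [hmem] at hq
      have hqm : q ≠ m := by
        intro h; rw [h, sub_self, inner_zero_left] at hq; nlinarith
      have he : ‖q - m‖ ≠ 0 := fun h => hqm (sub_eq_zero.mp (norm_eq_zero.mp h))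
      refine ⟨circleInversion m r q, ⟨?_, ?_⟩, ?_⟩
      · -- on the circle
        rw [← hm, circle_iff]
        have h1 : circleInversion m r q - m = (r ^ 2 / ‖q - m‖ ^ 2) • (q - m) := by
          rw [circleInversion, dist_eq_norm]; abel
        rw [h1, norm_smul, real_inner_smul_left, hq, Real.norm_eq_abs,
          abs_of_pos (by positivity), mul_pow]
        field_simp
      · -- not m
        intro h
        have h1 : circleInversion m r q - m = (r ^ 2 / ‖q - m‖ ^ 2) • (q - m) := by
          rw [circleInversion, dist_eq_norm]; abel
        rw [h, sub_self] at h1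
        have := smul_eq_zero.mp h1.symm
        rcases this with h2 | h2
        · have : (0:ℝ) < r ^ 2 / ‖q - m‖ ^ 2 := by positivity
          linarith [this, h2.ge, h2.le]
        · exact hqm (sub_eq_zero.mp h2)
      · -- inversion is involutive on this point
        have h1 : circleInversion m r q - m = (r ^ 2 / ‖q - m‖ ^ 2) • (q - m) := by
          rw [circleInversion, dist_eq_norm]; abel
        have hdist : dist (circleInversion m r q) m = r ^ 2 / ‖q - m‖ := by
          rw [dist_eq_norm, h1, norm_smul, Real.norm_eq_abs, abs_of_pos (by positivity)]
          field_simp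
        rw [circleInversion, hdist, h1, smul_smul]
        have : r ^ 2 / (r ^ 2 / ‖q - m‖) ^ 2 * (r ^ 2 / ‖q - m‖ ^ 2) = 1 := by
          field_simp
        rw [this, one_smul]; abel
end

section
/- Let c be a circle in ℝ² and let c' be a circle orthogonal to c. Then circle inversion with respect to c maps c' onto itself. -/
lemma circleInversion_ne_center (m : EuclideanSpace ℝ (Fin 2)) (r : ℝ) (hr : 0 < r)
    (p : EuclideanSpace ℝ (Fin 2)) (hp : p ≠ m) :
    dist (circleInversion m r p) m = r ^ 2 / dist p m := by
  have hd : (0:ℝ) < dist p m := dist_pos.mpr hp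
  unfold circleInversion
  rw [dist_eq_norm]
  have : m + (r ^ 2 / dist p m ^ 2) • (p - m) - m = (r ^ 2 / dist p m ^ 2) • (p - m) := by
    abel
  rw [this, norm_smul, Real.norm_eq_abs, abs_of_pos (by positivity), ← dist_eq_norm]
  field_simp

lemma circleInversion_involution (m : EuclideanSpace ℝ (Fin 2)) (r : ℝ) (hr : 0 < r)
    (p : EuclideanSpace ℝ (Fin 2)) (hp : p ≠ m) :
    circleInversion m r (circleInversion m r p) = p := by
  have hd : (0:ℝ) < dist p m := dist_pos.mpr hp
  have h1 := circleInversion_ne_center m r hr p hp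
  conv_lhs => rw [circleInversion, h1]
  rw [circleInversion]
  have h2 : m + (r ^ 2 / dist p m ^ 2) • (p - m) - m = (r ^ 2 / dist p m ^ 2) • (p - m) := by
    abel
  rw [h2, smul_smul]
  have : r ^ 2 / (r ^ 2 / dist p m) ^ 2 * (r ^ 2 / dist p m ^ 2) = 1 := by
    field_simp
  rw [this, one_smul]
  abel

lemma circleInversion_mem (m m' : EuclideanSpace ℝ (Fin 2)) (r r' : ℝ)
    (hr : 0 < r) (hr' : 0 < r') (horth : r ^ 2 + r' ^ 2 = dist m m' ^ 2)
    (p : EuclideanSpace ℝ (Fin 2)) (hp : dist p m' = r') :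
    dist (circleInversion m r p) m' = r' := by
  have hpm : p ≠ m := by
    rintro rfl
    rw [hp] at horth
    nlinarith
  have hd : (0:ℝ) < dist p m := dist_pos.mpr hpm
  set d : ℝ := dist p m with hdd
  set v : EuclideanSpace ℝ (Fin 2) := p - m with hv
  set w : EuclideanSpace ℝ (Fin 2) := m' - m with hw
  have hnv : ‖v‖ = d := by rw [hv, ← dist_eq_norm]
  have hnw : ‖w‖ ^ 2 = r ^ 2 + r' ^ 2 := by
    rw [hw, ← dist_eq_norm, dist_comm, horth]
  have hvw : ‖v - w‖ = r' := by
    have : v - w = p - m' := by rw [hv, hw]; abel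
    rw [this, ← dist_eq_norm, hp]
  have hinn : 2 * (inner ℝ v w : ℝ) = d ^ 2 + r ^ 2 := by
    have := norm_sub_sq_real v w
    rw [hvw, hnv] at this
    nlinarith
  have key : circleInversion m r p - m' = (r ^ 2 / d ^ 2) • v - w := by
    rw [circleInversion, hv, hw, ← hdd]; abel
  have hsq : dist (circleInversion m r p) m' ^ 2 = r' ^ 2 := by
    rw [dist_eq_norm, key, norm_sub_sq_real, norm_smul, real_inner_smul_left,
      Real.norm_eq_abs, abs_of_pos (by positivity : (0:ℝ) < r ^ 2 / d ^ 2), hnv]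
    have hinn' : (inner ℝ v w : ℝ) = (d ^ 2 + r ^ 2) / 2 := by linarith
    rw [hinn', hnw]
    field_simp
    ring
  nlinarith [dist_nonneg (x := circleInversion m r p) (y := m')]

/-- Inversion in a circle `c` maps any circle orthogonal to `c` onto itself. -/
theorem circleInversion_orthogonal_circle_invariant (m m' : EuclideanSpace ℝ (Fin 2))
    (r r' : ℝ) (hr : 0 < r) (hr' : 0 < r')
    (horth : r ^ 2 + r' ^ 2 = dist m m' ^ 2) :
    circleInversion m r '' {p | dist p m' = r'} = {p | dist p m' = r'} := by
  ext q
  constructor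
  · rintro ⟨p, hp, rfl⟩
    exact circleInversion_mem m m' r r' hr hr' horth p hp
  · intro hq
    refine ⟨circleInversion m r q, circleInversion_mem m m' r r' hr hr' horth q hq, ?_⟩
    apply circleInversion_involution m r hr
    rintro rfl
    rw [hq] at horth
    nlinarith
end

section
/- Let c be a circle and c₁, c₂ two circles both orthogonal to c. Then any intersection point of c₁ and c₂ lying strictly inside c is mapped by inversion in c to an intersection point of c₁ and c₂ lying strictly outside c; consequently c₁ and c₂ have at most one intersection point strictly inside c. -/
open RealInnerProductSpace

private lemma aux_ne_center (m m₁ p : EuclideanSpace ℝ (Fin 2)) (r r₁ : ℝ)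
    (hr : 0 < r) (ho : r ^ 2 + r₁ ^ 2 = dist m m₁ ^ 2) (hp : dist p m₁ = r₁) : p ≠ m := by
  intro h
  subst h
  rw [hp] at ho
  nlinarith

private lemma aux_on_circle (m m₁ p : EuclideanSpace ℝ (Fin 2)) (r r₁ : ℝ)
    (hr : 0 < r) (h₁ : 0 < r₁) (ho : r ^ 2 + r₁ ^ 2 = dist m m₁ ^ 2)
    (hp : dist p m₁ = r₁) (hpm : p ≠ m) :
    dist (circleInversion m r p) m₁ = r₁ := by
  have hd0 : 0 < dist p m := dist_pos.mpr hpm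
  have e1 : circleInversion m r p - m₁ = (r ^ 2 / dist p m ^ 2) • (p - m) + (m - m₁) := by
    simp only [circleInversion]
    module
  have hnpm : ‖p - m‖ = dist p m := (dist_eq_norm _ _).symm
  have hnmm : ‖m - m₁‖ = dist m m₁ := (dist_eq_norm _ _).symm
  have h1 : ‖circleInversion m r p - m₁‖ ^ 2
      = (r ^ 2 / dist p m ^ 2) ^ 2 * dist p m ^ 2
        + 2 * ((r ^ 2 / dist p m ^ 2) * ⟪p - m, m - m₁⟫) + dist m m₁ ^ 2 := by
    rw [e1, norm_add_sq_real, real_inner_smul_left, norm_smul, Real.norm_eq_abs,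
      mul_pow, sq_abs, hnpm, hnmm]
  have hI : dist p m ^ 2 + 2 * ⟪p - m, m - m₁⟫ + dist m m₁ ^ 2 = r₁ ^ 2 := by
    have h2 := norm_add_sq_real (p - m) (m - m₁)
    rw [show (p - m) + (m - m₁) = p - m₁ by abel, hnpm, hnmm, ← dist_eq_norm, hp] at h2
    nlinarith [h2]
  have hd2 : dist p m ^ 2 ≠ 0 := by positivity
  have key : dist (circleInversion m r p) m₁ ^ 2 = r₁ ^ 2 := by
    rw [dist_eq_norm, h1]
    have expand : (r ^ 2 / dist p m ^ 2) ^ 2 * dist p m ^ 2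
        + 2 * ((r ^ 2 / dist p m ^ 2) * ⟪p - m, m - m₁⟫) + dist m m₁ ^ 2
        = (r ^ 4 + r ^ 2 * (2 * ⟪p - m, m - m₁⟫) + dist m m₁ ^ 2 * dist p m ^ 2)
            / dist p m ^ 2 := by
      field_simp
    rw [expand, div_eq_iff hd2]
    nlinarith [hI, ho]
  have hnn : 0 ≤ dist (circleInversion m r p) m₁ := dist_nonneg
  nlinarith [key, hnn]

private lemma aux_dist_center (m p : EuclideanSpace ℝ (Fin 2)) (r : ℝ) (hpm : p ≠ m) :
    dist (circleInversion m r p) m = r ^ 2 / dist p m := by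
  have hd0 : 0 < dist p m := dist_pos.mpr hpm
  have : circleInversion m r p - m = (r ^ 2 / dist p m ^ 2) • (p - m) := by
    simp only [circleInversion]; abel
  rw [dist_eq_norm, this, norm_smul, Real.norm_eq_abs,
    abs_of_nonneg (by positivity), ← dist_eq_norm]
  field_simp

private lemma aux_radical (m₁ m₂ x y : EuclideanSpace ℝ (Fin 2)) (r₁ r₂ : ℝ)
    (hx1 : dist x m₁ = r₁) (hx2 : dist x m₂ = r₂)
    (hy1 : dist y m₁ = r₁) (hy2 : dist y m₂ = r₂) :
    ⟪x - y, m₂ - m₁⟫ = 0 := by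
  have e1 : ‖x - m₁‖ ^ 2 = ‖y - m₁‖ ^ 2 := by
    rw [← dist_eq_norm, ← dist_eq_norm, hx1, hy1]
  have e2 : ‖x - m₂‖ ^ 2 = ‖y - m₂‖ ^ 2 := by
    rw [← dist_eq_norm, ← dist_eq_norm, hx2, hy2]
  rw [norm_sub_sq_real, norm_sub_sq_real] at e1 e2
  rw [inner_sub_left, inner_sub_right, inner_sub_right]
  linarith

private lemma aux_parallel (v a b : EuclideanSpace ℝ (Fin 2)) (hv : v ≠ 0) (ha : a ≠ 0)
    (hav : ⟪a, v⟫ = 0) (hbv : ⟪b, v⟫ = 0) : ∃ t : ℝ, b = t • a := by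
  haveI : Fact (Module.finrank ℝ (EuclideanSpace ℝ (Fin 2)) = 1 + 1) :=
    ⟨by simp [finrank_euclideanSpace]⟩
  have hfin : Module.finrank ℝ ((ℝ ∙ v)ᗮ : Submodule ℝ (EuclideanSpace ℝ (Fin 2))) = 1 :=
    Submodule.finrank_orthogonal_span_singleton hv
  have hamem : a ∈ (ℝ ∙ v)ᗮ :=
    Submodule.mem_orthogonal_singleton_iff_inner_left.mpr hav
  have hbmem : b ∈ (ℝ ∙ v)ᗮ :=
    Submodule.mem_orthogonal_singleton_iff_inner_left.mpr hbv
  have hle : (ℝ ∙ a) ≤ (ℝ ∙ v)ᗮ := by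
    rw [Submodule.span_singleton_le_iff_mem]; exact hamem
  have hspan : (ℝ ∙ a) = (ℝ ∙ v)ᗮ := by
    apply Submodule.eq_of_le_of_finrank_le hle
    rw [hfin, finrank_span_singleton ha]
  rw [← hspan] at hbmem
  obtain ⟨t, ht⟩ := Submodule.mem_span_singleton.mp hbmem
  exact ⟨t, ht.symm⟩

/-- If `c₁` and `c₂` are two distinct circles both orthogonal to the circle `c` (center `m`,
radius `r`), then inversion in `c` maps any intersection point of `c₁` and `c₂` lying
strictly inside `c` to an intersection point lying strictly outside `c`; consequently `c₁`
and `c₂` have at most one intersection point strictly inside `c`. -/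
theorem orthogonal_circles_at_most_one_intersection_inside
    (m m₁ m₂ : EuclideanSpace ℝ (Fin 2)) (r r₁ r₂ : ℝ)
    (hr : 0 < r) (h₁ : 0 < r₁) (h₂ : 0 < r₂)
    (ho₁ : r ^ 2 + r₁ ^ 2 = dist m m₁ ^ 2) (ho₂ : r ^ 2 + r₂ ^ 2 = dist m m₂ ^ 2)
    (hne : {p : EuclideanSpace ℝ (Fin 2) | dist p m₁ = r₁} ≠ {p | dist p m₂ = r₂}) :
    (∀ p : EuclideanSpace ℝ (Fin 2), dist p m₁ = r₁ → dist p m₂ = r₂ → dist p m < r →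
        dist (circleInversion m r p) m₁ = r₁ ∧ dist (circleInversion m r p) m₂ = r₂ ∧
          r < dist (circleInversion m r p) m) ∧
    {p : EuclideanSpace ℝ (Fin 2) |
      dist p m₁ = r₁ ∧ dist p m₂ = r₂ ∧ dist p m < r}.Subsingleton := by
  have main : ∀ p : EuclideanSpace ℝ (Fin 2), dist p m₁ = r₁ → dist p m₂ = r₂ →
      dist p m < r →
      dist (circleInversion m r p) m₁ = r₁ ∧ dist (circleInversion m r p) m₂ = r₂ ∧
        r < dist (circleInversion m r p) m := by
    intro p hp1 hp2 hpin
    have hpm : p ≠ m := aux_ne_center m m₁ p r r₁ hr ho₁ hp1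
    have hd0 : 0 < dist p m := dist_pos.mpr hpm
    refine ⟨aux_on_circle m m₁ p r r₁ hr h₁ ho₁ hp1 hpm,
      aux_on_circle m m₂ p r r₂ hr h₂ ho₂ hp2 hpm, ?_⟩
    rw [aux_dist_center m p r hpm, lt_div_iff₀ hd0]
    nlinarith
  refine ⟨main, ?_⟩
  intro p hp q hq
  by_contra hpq
  obtain ⟨hp1, hp2, hpin⟩ := hp
  obtain ⟨hq1, hq2, hqin⟩ := hq
  -- m₁ ≠ m₂
  have hm12 : m₁ ≠ m₂ := by
    intro h
    subst h
    have : r₁ = r₂ := by rw [← hp1, hp2]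
    subst this
    exact hne rfl
  set p' := circleInversion m r p with hp'
  obtain ⟨hp'1, hp'2, hp'out⟩ := main p hp1 hp2 hpin
  rw [← hp'] at hp'1 hp'2 hp'out
  have hv : m₂ - m₁ ≠ 0 := sub_ne_zero.mpr (Ne.symm hm12)
  have hu : q - p ≠ 0 := sub_ne_zero.mpr (Ne.symm hpq)
  have hqv : ⟪q - p, m₂ - m₁⟫ = 0 := aux_radical m₁ m₂ q p r₁ r₂ hq1 hq2 hp1 hp2
  have hp'v : ⟪p' - p, m₂ - m₁⟫ = 0 := aux_radical m₁ m₂ p' p r₁ r₂ hp'1 hp'2 hp1 hp2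
  obtain ⟨t, ht⟩ := aux_parallel (m₂ - m₁) (q - p) (p' - p) hv hu hqv hp'v
  have hp'nep : p' ≠ p := by
    intro h
    rw [h] at hp'out
    exact absurd hp'out (not_lt.mpr hpin.le)
  have ht0 : t ≠ 0 := by
    intro h
    rw [h, zero_smul] at ht
    exact hp'nep (sub_eq_zero.mp ht)
  -- quadratic argument: t must be 1, so p' = q, contradiction
  have hA : ‖p - m₁‖ = r₁ := by rw [← dist_eq_norm, hp1]
  have hB : ‖q - m₁‖ = r₁ := by rw [← dist_eq_norm, hq1]
  have hC : ‖p' - m₁‖ = r₁ := by rw [← dist_eq_norm, hp'1]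
  have eq1 : q - m₁ = (q - p) + (p - m₁) := by abel
  have eq2 : p' - m₁ = t • (q - p) + (p - m₁) := by
    rw [← ht]; abel
  have hB2 : ‖q - p‖ ^ 2 + 2 * ⟪q - p, p - m₁⟫ = 0 := by
    have := norm_add_sq_real (q - p) (p - m₁)
    rw [← eq1, hB, hA] at this
    linarith
  have hC2 : t ^ 2 * ‖q - p‖ ^ 2 + 2 * (t * ⟪q - p, p - m₁⟫) = 0 := by
    have := norm_add_sq_real (t • (q - p)) (p - m₁)
    rw [← eq2, hC, hA, real_inner_smul_left, norm_smul, Real.norm_eq_abs,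
      mul_pow, sq_abs] at this
    linarith
  have hu2 : (0:ℝ) < ‖q - p‖ ^ 2 := pow_pos (norm_pos_iff.mpr hu) 2
  have ht1 : t = 1 := by
    have h3 : t * (t * ‖q - p‖ ^ 2 + 2 * ⟪q - p, p - m₁⟫) = 0 := by linear_combination hC2
    have h4 : t * ‖q - p‖ ^ 2 + 2 * ⟪q - p, p - m₁⟫ = 0 := by
      rcases mul_eq_zero.mp h3 with h | h
      · exact absurd h ht0
      · exact h
    have h5 : (t - 1) * ‖q - p‖ ^ 2 = 0 := by linarith
    have := mul_eq_zero.mp h5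
    rcases this with h | h
    · linarith
    · exact absurd h (ne_of_gt hu2)
  rw [ht1, one_smul] at ht
  have : p' = q := sub_left_inj.mp ht
  rw [this] at hp'out
  exact absurd hp'out (not_lt.mpr hqin.le)
end

section
/- Let a be a circular arc with endpoints u and v on its underlying circle c. For any angle φ with 0 ≤ φ < π/2, there is exactly one circular arc from u to v (on the same side) making the same angle φ with c at both u and v; in particular, given the positions of u and v on a circle c and equal crossing angles with c at both endpoints, the arc connecting them is uniquely determined. -/
open Complex ComplexConjugate

/-- The point of the circle with center `γ`, orientation `ε` (`1` = counterclockwise,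
`-1` = clockwise) reached after sweeping an angle `t` starting from the point `a`. -/
noncomputable def arcPoint (γ : ℂ) (ε : ℝ) (a : ℂ) (t : ℝ) : ℂ :=
  γ + Complex.exp (((ε * t : ℝ) : ℂ) * Complex.I) * (a - γ)

/-- `A` is a circular arc or line segment from `u` to `v` with unit tangent direction
`tu` at `u` (pointing along the arc) and unit tangent direction `tv` at `v`
(the direction of travel arriving at `v`). -/
def IsArcFromTo (A : Set ℂ) (u v tu tv : ℂ) : Prop :=
  (A = segment ℝ u v ∧ tu = (v - u) / ‖v - u‖ ∧ tv = (v - u) / ‖v - u‖) ∨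
  (∃ (γ : ℂ) (ε Δ : ℝ), (ε = 1 ∨ ε = -1) ∧ 0 < Δ ∧ Δ < 2 * Real.pi ∧ u ≠ γ ∧
    arcPoint γ ε u Δ = v ∧ A = arcPoint γ ε u '' Set.Icc 0 Δ ∧
    tu = (ε : ℂ) * Complex.I * (u - γ) / ‖u - γ‖ ∧
    tv = (ε : ℂ) * Complex.I * (v - γ) / ‖v - γ‖)

lemma keyId (a b : ℂ) (r2 : ℝ) (ha : Complex.normSq a = r2) (hb : Complex.normSq b = r2)
    (hab : a ≠ b) (hr : r2 ≠ 0) :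
    -(a*b) / (r2 : ℂ) = (b-a)^2 / (Complex.normSq (b-a) : ℂ) := by
  have h1 : (Complex.normSq (b-a) : ℂ) ≠ 0 := by
    simpa [Complex.normSq_eq_zero, sub_eq_zero] using hab.symm
  have h2 : (r2 : ℂ) ≠ 0 := by exact_mod_cast hr
  rw [div_eq_div_iff h2 h1]
  have e1 : a * conj a = (r2 : ℂ) := by rw [Complex.mul_conj, ha]
  have e2 : b * conj b = (r2 : ℂ) := by rw [Complex.mul_conj, hb]
  have e3 : ((Complex.normSq (b-a) : ℝ) : ℂ) = (b-a) * conj (b-a) := (Complex.mul_conj _).symm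
  rw [e3]
  simp only [map_sub]
  linear_combination (b^2 - a*b) * e1 + (a^2 - a*b) * e2

lemma re_half (u v γ : ℂ) (h : Complex.normSq (u-γ) = Complex.normSq (v-γ)) :
    ((u-v) * conj (u-γ)).re = Complex.normSq (u-v)/2 := by
  simp only [Complex.normSq_apply, Complex.mul_re, Complex.sub_re, Complex.sub_im,
    Complex.conj_re, Complex.conj_im] at *
  linear_combination h/2

lemma arc_normSq {γ : ℂ} {ε Δ : ℝ} {u v : ℂ} (h : arcPoint γ ε u Δ = v) :
    Complex.normSq (u - γ) = Complex.normSq (v - γ) := by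
  have hvg : v - γ = Complex.exp (((ε * Δ : ℝ) : ℂ) * Complex.I) * (u - γ) := by
    rw [← h]; simp [arcPoint]
  have h2 : Complex.normSq (Complex.exp (((ε * Δ : ℝ) : ℂ) * Complex.I)) = 1 := by
    rw [Complex.normSq_eq_norm_sq, Complex.norm_exp_ofReal_mul_I]; norm_num
  rw [hvg, Complex.normSq_mul, h2, one_mul]

lemma seg_arc_absurd {u v γ : ℂ} {ε : ℝ} (huv : u ≠ v) (huγ : u ≠ γ)
    (hε : ε = 1 ∨ ε = -1)
    (hnsq : Complex.normSq (u - γ) = Complex.normSq (v - γ))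
    (heq : (v - u) / (‖v - u‖ : ℂ) = (ε : ℂ) * Complex.I * (u - γ) / (‖u - γ‖ : ℂ)) :
    False := by
  have hD : v - u ≠ 0 := sub_ne_zero.mpr huv.symm
  have hnD : (‖v - u‖ : ℝ) ≠ 0 := norm_ne_zero_iff.mpr hD
  have hG : u - γ ≠ 0 := sub_ne_zero.mpr huγ
  have hr : (‖u - γ‖ : ℝ) ≠ 0 := norm_ne_zero_iff.mpr hG
  have hε2 : (ε:ℂ) * (ε:ℂ) = 1 := by rcases hε with h | h <;> norm_num [h]
  have hnD' : ((‖v - u‖ : ℝ) : ℂ) ≠ 0 := Complex.ofReal_ne_zero.mpr hnD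
  have hr' : ((‖u - γ‖ : ℝ) : ℂ) ≠ 0 := Complex.ofReal_ne_zero.mpr hr
  rw [div_eq_div_iff hnD' hr'] at heq
  have hc1 : (v - u) * (‖u - γ‖ : ℂ) = (ε : ℂ) * Complex.I * (u - γ) * (‖v - u‖ : ℂ) := heq
  have hc2 : conj (v - u) * (‖u - γ‖ : ℂ) = -(ε : ℂ) * Complex.I * conj (u - γ) * (‖v - u‖ : ℂ) := by
    have := congrArg conj hc1
    simpa [Complex.conj_ofReal, mul_comm, mul_left_comm, mul_assoc] using this
  have hmc := Complex.mul_conj (v - u)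
  have hz : (u-v) * conj (u-γ) * (‖v - u‖ : ℂ)
      = -((ε * ‖u - γ‖ * Complex.normSq (v-u) : ℝ) : ℂ) * Complex.I := by
    push_cast
    linear_combination (-(ε:ℂ) * Complex.I * (u-v)) * hc2
      + (-(ε:ℂ) * Complex.I * (‖u - γ‖ : ℂ)) * hmc
      + ((u-v) * conj (u-γ) * (‖v - u‖ : ℂ) * (ε:ℂ) * (ε:ℂ)) * Complex.I_mul_I
      + (-(u-v) * conj (u-γ) * (‖v - u‖ : ℂ)) * hε2
  have hre := re_half u v γ hnsq
  have h0 : ((u-v) * conj (u-γ)).re * ‖v - u‖ = 0 := by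
    have := congrArg Complex.re hz
    simpa [Complex.mul_re] using this
  have h1 : Complex.normSq (u - v) ≠ 0 := by
    simpa [Complex.normSq_eq_zero, sub_eq_zero] using huv
  rw [hre] at h0
  rcases mul_eq_zero.mp h0 with h | h
  · exact h1 (by linarith)
  · exact hnD h

lemma arc_arc_eq {u v : ℂ} (huv : u ≠ v) {γ γ' : ℂ} {ε ε' Δ Δ' : ℝ}
    (hε : ε = 1 ∨ ε = -1) (hε' : ε' = 1 ∨ ε' = -1)
    (hΔ0 : 0 < Δ) (hΔ1 : Δ < 2*Real.pi) (hΔ0' : 0 < Δ') (hΔ1' : Δ' < 2*Real.pi)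
    (hg : u ≠ γ) (hg' : u ≠ γ')
    (hv : arcPoint γ ε u Δ = v) (hv' : arcPoint γ' ε' u Δ' = v)
    (ht : (ε:ℂ) * Complex.I * (u-γ) / (‖u-γ‖:ℂ) = (ε':ℂ) * Complex.I * (u-γ') / (‖u-γ'‖:ℂ)) :
    γ = γ' ∧ ε = ε' ∧ Δ = Δ' := by
  have hG : u - γ ≠ 0 := sub_ne_zero.mpr hg
  have hG' : u - γ' ≠ 0 := sub_ne_zero.mpr hg'
  have hr : (‖u - γ‖ : ℝ) ≠ 0 := norm_ne_zero_iff.mpr hG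
  have hr' : (‖u - γ'‖ : ℝ) ≠ 0 := norm_ne_zero_iff.mpr hG'
  have hrc : ((‖u - γ‖ : ℝ):ℂ) ≠ 0 := Complex.ofReal_ne_zero.mpr hr
  have hrc' : ((‖u - γ'‖ : ℝ):ℂ) ≠ 0 := Complex.ofReal_ne_zero.mpr hr'
  have hε2' : (ε':ℂ) * (ε':ℂ) = 1 := by rcases hε' with h | h <;> norm_num [h]
  rw [div_eq_div_iff hrc hrc'] at ht
  have hq0 : (u - γ') * (‖u-γ‖:ℂ) = (ε:ℂ) * (ε':ℂ) * (‖u-γ'‖:ℂ) * (u-γ) := by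
    linear_combination ((ε':ℂ)*Complex.I) * ht
      + (-(ε:ℂ)*(ε':ℂ)*(u-γ)*((‖u-γ'‖:ℝ):ℂ) + (u-γ')*((‖u-γ‖:ℝ):ℂ)) * Complex.I_mul_I
      + ((u-γ')*((‖u-γ‖:ℝ):ℂ)*Complex.I*Complex.I) * hε2'
  have hre := re_half u v γ (arc_normSq hv)
  have hre' := re_half u v γ' (arc_normSq hv')
  have hc : conj (u - γ') * (‖u-γ‖:ℂ) = (ε:ℂ) * (ε':ℂ) * (‖u-γ'‖:ℂ) * conj (u-γ) := by
    have := congrArg conj hq0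
    simpa [map_mul, Complex.conj_ofReal, mul_comm, mul_left_comm, mul_assoc] using this
  have hrel : ((u-v) * conj (u-γ')).re * ‖u-γ‖ = (ε * ε' * ‖u-γ'‖) * ((u-v) * conj (u-γ)).re := by
    have h1 : ((‖u-γ‖:ℝ):ℂ) * ((u-v) * conj (u-γ'))
        = ((ε * ε' * ‖u-γ'‖ : ℝ):ℂ) * ((u-v) * conj (u-γ)) := by
      push_cast
      linear_combination (u-v) * hc
    have h2 := congrArg Complex.re h1
    rw [Complex.re_ofReal_mul, Complex.re_ofReal_mul] at h2
    linarith
  have hNS : Complex.normSq (u - v) ≠ 0 := by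
    simpa [Complex.normSq_eq_zero, sub_eq_zero] using huv
  rw [hre, hre'] at hrel
  have hNS2 : Complex.normSq (u - v)/2 ≠ 0 := by
    intro h; exact hNS (by linarith)
  have hfac : ‖u-γ‖ = ε * ε' * ‖u-γ'‖ := by
    apply mul_right_cancel₀ hNS2
    linear_combination hrel
  have hεε : ε = ε' := by
    have p1 : 0 < ‖u - γ‖ := norm_pos_iff.mpr hG
    have p2 : 0 < ‖u - γ'‖ := norm_pos_iff.mpr hG'
    rcases hε with h | h <;> rcases hε' with h' | h' <;> subst h <;> subst h' <;> try rfl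
    all_goals (exfalso; rw [hfac] at p1; linarith)
  have hεε2 : ε * ε' = 1 := by rcases hε with h | h <;> rw [hεε] at h ⊢ <;> norm_num [h]
  have hrr : ‖u-γ‖ = ‖u-γ'‖ := by rw [hfac, hεε2, one_mul]
  have hγ : γ = γ' := by
    have h1 : (u - γ') * (‖u-γ‖:ℂ) = (u - γ) * (‖u-γ‖:ℂ) := by
      rw [hq0, hrr]
      push_cast
      linear_combination (((‖u-γ'‖:ℝ):ℂ) * (u - γ)) * (by exact_mod_cast congrArg (fun x:ℝ => (x:ℂ)) hεε2 : (ε:ℂ) * (ε':ℂ) = 1)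
    have h2 := mul_right_cancel₀ hrc h1
    have h3 := congrArg (fun z => u - z) h2
    have h4 : γ' = γ := by simpa using h3
    exact h4.symm
  refine ⟨hγ, hεε, ?_⟩
  subst hγ
  rw [← hεε] at hv'
  have he : Complex.exp (((ε * Δ : ℝ) : ℂ) * Complex.I) * (u - γ)
      = Complex.exp (((ε * Δ' : ℝ) : ℂ) * Complex.I) * (u - γ) := by
    have h1 : arcPoint γ ε u Δ = arcPoint γ ε u Δ' := hv.trans hv'.symm
    simpa [arcPoint] using h1
  have he2 := mul_right_cancel₀ hG he
  rw [Complex.exp_eq_exp_iff_exists_int] at he2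
  obtain ⟨n, hn⟩ := he2
  have hn' : (((ε * Δ - ε * Δ' - n * (2 * Real.pi) : ℝ)) : ℂ) * Complex.I = 0 := by
    push_cast at hn ⊢
    linear_combination hn
  have hn2 : ε * Δ - ε * Δ' - n * (2 * Real.pi) = 0 := by
    rcases mul_eq_zero.mp hn' with h | h
    · exact_mod_cast h
    · exact absurd h Complex.I_ne_zero
  have hpi := Real.pi_pos
  have hn0 : n = 0 := by
    by_contra hne
    have h1 : (1:ℝ) ≤ |(n:ℝ)| := by exact_mod_cast Int.one_le_abs (by exact_mod_cast hne)
    have h2 : |(n:ℝ) * (2 * Real.pi)| = |(n:ℝ)| * (2 * Real.pi) := by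
      have h2p : |2 * Real.pi| = 2 * Real.pi := abs_of_pos (by linarith)
      rw [abs_mul, h2p]
    have h3 : |ε * Δ - ε * Δ'| < 2 * Real.pi := by
      rcases hε with h | h <;> subst h <;> rw [abs_lt] <;> constructor <;> nlinarith
    rw [show ε * Δ - ε * Δ' = (n:ℝ) * (2 * Real.pi) by linarith] at h3
    rw [h2] at h3
    nlinarith
  rw [hn0] at hn2
  push_cast at hn2
  rcases hε with h | h <;> subst h <;> nlinarith [hn2]

lemma isArcFromTo_unique {u v tu tv tv' : ℂ} (huv : u ≠ v) {A B : Set ℂ}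
    (hA : IsArcFromTo A u v tu tv) (hB : IsArcFromTo B u v tu tv') : A = B := by
  rcases hA with ⟨hA1, hAtu, -⟩ | ⟨γ, ε, Δ, hε, hΔ0, hΔ1, hg, hav, hA1, hAtu, -⟩ <;>
    rcases hB with ⟨hB1, hBtu, -⟩ | ⟨γ', ε', Δ', hε', hΔ0', hΔ1', hg', hav', hB1, hBtu, -⟩
  · rw [hA1, hB1]
  · exact absurd (hAtu.symm.trans hBtu) (fun h => seg_arc_absurd huv hg' hε' (arc_normSq hav') h)
  · exact absurd (hBtu.symm.trans hAtu) (fun h => seg_arc_absurd huv hg hε (arc_normSq hav) h)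
  · obtain ⟨h1, h2, h3⟩ := arc_arc_eq huv hε hε' hΔ0 hΔ1 hΔ0' hΔ1' hg hg' hav hav'
      (hAtu.symm.trans hBtu)
    rw [hA1, hB1, h1, h2, h3]

lemma exists_arc (m : ℂ) (ρ : ℝ) (hρ : 0 < ρ) (u v : ℂ)
    (hu : dist u m = ρ) (hv : dist v m = ρ) (huv : u ≠ v) (φ : ℝ) (hφ0 : 0 ≤ φ)
    (hφ1 : φ < Real.pi / 2) :
    ∃ A : Set ℂ, IsArcFromTo A u v
      (Complex.exp ((φ : ℂ) * Complex.I) * (Complex.I * (u - m) / (ρ : ℂ)))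
      (Complex.exp (-(φ : ℂ) * Complex.I) * (Complex.I * (v - m) / (ρ : ℂ))) := by
  set tu := Complex.exp ((φ : ℂ) * Complex.I) * (Complex.I * (u - m) / (ρ : ℂ)) with htu
  set tv := Complex.exp (-(φ : ℂ) * Complex.I) * (Complex.I * (v - m) / (ρ : ℂ)) with htv
  clear_value tu tv
  have hρ' : (ρ : ℝ) ≠ 0 := ne_of_gt hρ
  have hρc : ((ρ : ℝ) : ℂ) ≠ 0 := Complex.ofReal_ne_zero.mpr hρ'
  have hau : ‖u - m‖ = ρ := by rw [← Complex.dist_eq]; exact hu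
  have hav : ‖v - m‖ = ρ := by rw [← Complex.dist_eq]; exact hv
  have hnsu : Complex.normSq (u - m) = ρ^2 := by rw [Complex.normSq_eq_norm_sq, hau]
  have hnsv : Complex.normSq (v - m) = ρ^2 := by rw [Complex.normSq_eq_norm_sq, hav]
  have hum : u - m ≠ 0 := by
    intro h; rw [h] at hau; simp at hau; exact hρ' hau.symm
  have habs_tu : ‖tu‖ = 1 := by
    rw [htu]
    simp [norm_mul, norm_div, Complex.norm_exp_ofReal_mul_I, hau, Complex.norm_real,
      abs_of_pos hρ]
    exact hρ'
  have htu0 : tu ≠ 0 := by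
    intro h; rw [h] at habs_tu; simp at habs_tu
  have hD : v - u ≠ 0 := sub_ne_zero.mpr huv.symm
  have hnD : (0:ℝ) < ‖v - u‖ := norm_pos_iff.mpr hD
  have hNS : (0:ℝ) < Complex.normSq (v - u) := by
    rw [Complex.normSq_pos]; exact hD
  have hNSc : ((Complex.normSq (v - u) : ℝ) : ℂ) ≠ 0 := Complex.ofReal_ne_zero.mpr (ne_of_gt hNS)
  -- the two-tangent product identity
  have hee : Complex.exp ((φ : ℂ) * Complex.I) * Complex.exp (-(φ : ℂ) * Complex.I) = 1 := by
    rw [← Complex.exp_add]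
    norm_num
  have humvm : u - m ≠ v - m := by
    intro h; apply huv; have := congrArg (fun z => z + m) h; simpa using this
  have hkey := keyId (u - m) (v - m) (ρ^2) hnsu hnsv humvm (by positivity)
  have hprod : tu * tv = (v - u)^2 / ((Complex.normSq (v - u) : ℝ) : ℂ) := by
    have h1 : tu * tv = -((u-m) * (v-m)) / ((ρ:ℂ))^2 := by
      calc tu * tv = (Complex.exp ((φ : ℂ) * Complex.I) * Complex.exp (-(φ : ℂ) * Complex.I))
            * ((Complex.I * Complex.I) * ((u-m)*(v-m)) / ((ρ:ℂ))^2) := by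
            rw [htu, htv]; ring
        _ = -((u-m) * (v-m)) / ((ρ:ℂ))^2 := by rw [hee, Complex.I_mul_I]; ring
    rw [h1]
    have h2 : ((ρ:ℂ))^2 = ((ρ^2 : ℝ) : ℂ) := by push_cast; ring
    rw [h2, hkey]
    have h3 : v - m - (u - m) = v - u := by ring
    rw [h3]
  obtain ⟨nD0, hnD0⟩ : ∃ x : ℝ, x = ‖v - u‖ := ⟨_, rfl⟩
  have hnD0pos : 0 < nD0 := hnD0 ▸ hnD
  have hnD0c : ((nD0 : ℝ):ℂ) ≠ 0 := Complex.ofReal_ne_zero.mpr (ne_of_gt hnD0pos)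
  set c1 := ((v - u) * conj tu).im with hc1
  by_cases hc : c1 = 0
  · -- segment case
    set t := ((v - u) * conj tu).re with ht
    have hDt : (v - u) * conj tu = (t : ℂ) := by
      apply Complex.ext
      · simp [← ht]
      · rw [← hc1] at *; simp [hc]
    have hntu : conj tu * tu = 1 := by
      rw [mul_comm, Complex.mul_conj, Complex.normSq_eq_norm_sq, habs_tu]
      norm_num
    have hvu : v - u = (t : ℂ) * tu := by
      have h0 := congrArg (fun z => z * tu) hDt
      rw [mul_assoc, hntu, mul_one] at h0
      exact h0
    have habst : |t| = nD0 := by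
      have h0 := congrArg Norm.norm hvu
      rw [norm_mul, habs_tu, mul_one, Complex.norm_real, Real.norm_eq_abs] at h0
      rw [hnD0]
      exact h0.symm
    have htpos : 0 < t := by
      rcases lt_trichotomy t 0 with h | h | h
      · exfalso
        have ht1 : t = -nD0 := by
          rcases abs_cases t with ⟨h1, h2⟩ | ⟨h1, h2⟩ <;> linarith [habst]
        set w := Complex.I * (u - m) / (ρ:ℂ) with hw
        clear_value w
        have habsw : ‖w‖ = 1 := by
          rw [hw]
          simp [norm_mul, norm_div, hau, Complex.norm_real, abs_of_pos hρ]
          exact hρ'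
        have hcw : conj w * w = 1 := by
          rw [mul_comm, Complex.mul_conj, Complex.normSq_eq_norm_sq, habsw]
          norm_num
        have htuw : tu = Complex.exp ((φ:ℂ) * Complex.I) * w := htu
        have hwtu : conj w * tu = Complex.exp ((φ:ℂ) * Complex.I) := by
          rw [htuw, show conj w * (Complex.exp ((φ:ℂ) * Complex.I) * w)
            = Complex.exp ((φ:ℂ) * Complex.I) * (conj w * w) from by ring, hcw, mul_one]
        have hsin : (conj w * tu).im = Real.sin φ := by
          rw [hwtu]
          simp
        have hsin0 : 0 ≤ Real.sin φ := by
          apply Real.sin_nonneg_of_nonneg_of_le_pi hφ0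
          linarith [Real.pi_pos]
        have htC : ((t:ℝ):ℂ) = -((nD0:ℝ):ℂ) := by rw [ht1]; push_cast; ring
        have htu_eq : tu = -(((nD0 : ℝ):ℂ))⁻¹ * (v - u) := by
          calc tu = ((((nD0 : ℝ):ℂ))⁻¹ * (((nD0 : ℝ):ℂ))) * tu := by
                rw [inv_mul_cancel₀ hnD0c, one_mul]
            _ = -(((nD0 : ℝ):ℂ))⁻¹ * (v - u) := by rw [hvu, htC]; ring
        have hre_ab := re_half (u - m) (v - m) 0 (by rw [sub_zero, sub_zero, hnsu, hnsv])
        have hre2 : ((u - v) * conj (u - m)).re = Complex.normSq (u - v)/2 := by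
          have e1 : u - m - (v - m) = u - v := by ring
          rw [e1, sub_zero] at hre_ab
          exact hre_ab
        have hcw2 : conj w = -Complex.I * conj (u - m) / (ρ:ℂ) := by
          rw [hw, map_div₀, map_mul, Complex.conj_I, Complex.conj_ofReal]
        have hP : conj w * tu = (((ρ * nD0)⁻¹ : ℝ):ℂ)
            * (Complex.I * ((v - u) * conj (u - m))) := by
          rw [hcw2, htu_eq]
          push_cast
          ring
        have hPim : (conj w * tu).im = (ρ * nD0)⁻¹ * (-(Complex.normSq (u - v)/2)) := by
          have e2 : Complex.I * ((v - u) * conj (u - m))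
              = Complex.I * (-((u - v) * conj (u - m))) := by ring
          rw [hP, Complex.im_ofReal_mul, e2]
          rw [show (Complex.I * (-((u - v) * conj (u - m)))).im
            = (-((u - v) * conj (u - m))).re from Complex.I_mul_im _, Complex.neg_re, hre2]
        have hNS2 : 0 < Complex.normSq (u - v) := by
          rw [Complex.normSq_pos]
          exact sub_ne_zero.mpr huv
        have hinv : 0 < (ρ * nD0)⁻¹ := by positivity
        rw [hsin] at hPim
        nlinarith
      · exfalso
        rw [h] at habst
        simp at habst
        exact hnD0pos.ne habst
      · exact h
    have htval : ((t:ℝ):ℂ) = ((nD0:ℝ):ℂ) := by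
      rw [show t = nD0 from by rw [← habst]; exact (abs_of_pos htpos).symm]
    have htu_seg0 : tu = (v - u) / ((nD0 : ℝ):ℂ) := by
      rw [eq_div_iff hnD0c, hvu, htval]
      ring
    have htv_seg0 : tv = (v - u) / ((nD0 : ℝ):ℂ) := by
      apply mul_left_cancel₀ htu0
      rw [hprod, htu_seg0]
      have hns : ((Complex.normSq (v - u) : ℝ):ℂ) = ((nD0 : ℝ):ℂ)^2 := by
        rw [Complex.normSq_eq_norm_sq, ← hnD0]
        push_cast
        ring
      rw [hns]
      ring
    refine ⟨segment ℝ u v, Or.inl ⟨rfl, ?_, ?_⟩⟩ <;> rw [← hnD0]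
    · exact htu_seg0
    · exact htv_seg0
  · -- arc case
    have hc1abs : 0 < |c1| := abs_pos.mpr hc
    set ε : ℝ := if 0 < c1 then 1 else -1 with hε
    have hεpm : ε = 1 ∨ ε = -1 := by
      rw [hε]; split_ifs <;> simp
    have hε2C : (ε:ℂ) * (ε:ℂ) = 1 := by rcases hεpm with h | h <;> norm_num [h]
    have hεc : ε * c1 = |c1| := by
      rw [hε]
      split_ifs with h
      · rw [one_mul, abs_of_pos h]
      · rw [abs_of_neg (lt_of_le_of_ne (not_lt.mp h) hc), neg_one_mul]
    set r : ℝ := Complex.normSq (v - u) / (2 * |c1|) with hrdef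
    have hr0 : 0 < r := by
      rw [hrdef]; positivity
    have hrc : ((r:ℝ):ℂ) ≠ 0 := Complex.ofReal_ne_zero.mpr (ne_of_gt hr0)
    set γ : ℂ := u + ((ε * r : ℝ):ℂ) * (Complex.I * tu) with hγ
    have hug : u - γ = -((ε * r : ℝ):ℂ) * (Complex.I * tu) := by rw [hγ]; ring
    have hnormug : ‖u - γ‖ = r := by
      rw [hug]
      rw [norm_mul, norm_mul, norm_neg, Complex.norm_real, Real.norm_eq_abs, Complex.norm_I, habs_tu]
      rw [abs_mul]
      rcases hεpm with h | h <;> rw [h] <;> simp [abs_of_pos hr0]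
    have hgu : u ≠ γ := by
      intro h
      rw [← h] at hnormug
      simp at hnormug
      exact (ne_of_gt hr0) hnormug.symm
    have hGu : u - γ ≠ 0 := sub_ne_zero.mpr hgu
    have hnsqu : Complex.normSq (u - γ) = r^2 := by
      rw [Complex.normSq_eq_norm_sq, hnormug]
    have hre_b : ((v - u) * conj (((ε * r : ℝ):ℂ) * (Complex.I * tu))).re
        = Complex.normSq (v - u) / 2 := by
      have e1 : (v - u) * conj (((ε * r : ℝ):ℂ) * (Complex.I * tu))
          = ((ε * r : ℝ):ℂ) * (-Complex.I * ((v - u) * conj tu)) := by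
        rw [map_mul, map_mul, Complex.conj_ofReal, Complex.conj_I]
        ring
      rw [e1, Complex.re_ofReal_mul]
      have e2 : (-Complex.I * ((v - u) * conj tu)).re = ((v - u) * conj tu).im := by
        rw [show -Complex.I * ((v - u) * conj tu) = -(Complex.I * ((v - u) * conj tu)) from by
          ring, Complex.neg_re, Complex.I_mul_re, neg_neg]
      rw [e2, ← hc1]
      have : ε * r * c1 = (ε * c1) * r := by ring
      rw [this, hεc, hrdef]
      field_simp
    have hnsqv : Complex.normSq (v - γ) = r^2 := by
      have e0 : v - γ = (v - u) - ((ε * r : ℝ):ℂ) * (Complex.I * tu) := by rw [hγ]; ring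
      rw [e0, Complex.normSq_sub, hre_b]
      have e1 : Complex.normSq (((ε * r : ℝ):ℂ) * (Complex.I * tu)) = r^2 := by
        rw [Complex.normSq_mul, Complex.normSq_mul, Complex.normSq_ofReal,
          Complex.normSq_I, Complex.normSq_eq_norm_sq, habs_tu]
        rcases hεpm with h | h <;> rw [h] <;> ring
      rw [e1]
      ring
    have hnormvg : ‖v - γ‖ = r := by
      rw [Complex.norm_def, hnsqv, Real.sqrt_sq hr0.le]
    have hGv : v - γ ≠ 0 := by
      intro h
      rw [h] at hnsqv
      rw [map_zero] at hnsqv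
      nlinarith [hnsqv, pow_pos hr0 2]
    have hvγ : v ≠ γ := fun h => hGv (sub_eq_zero.mpr h)
    have htu_arc : tu = (ε:ℂ) * Complex.I * (u - γ) / ((‖u - γ‖:ℝ):ℂ) := by
      rw [hnormug, eq_div_iff hrc, hug]
      push_cast
      linear_combination ((ε:ℂ)*(ε:ℂ)*(r:ℂ)*tu) * Complex.I_mul_I + (-(r:ℂ)*tu) * hε2C
    -- construct the sweep angle Δ
    set q : ℂ := (v - γ) / (u - γ) with hq
    have habsq : ‖q‖ = 1 := by
      rw [hq, norm_div, hnormug, hnormvg]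
      exact div_self (ne_of_gt hr0)
    have hq1 : q ≠ 1 := by
      rw [hq]
      intro h
      rw [div_eq_one_iff_eq hGu] at h
      exact huv (sub_left_inj.mp h).symm
    have harg : Complex.exp ((Complex.arg q : ℂ) * Complex.I) = q := by
      have h0 := Complex.norm_mul_exp_arg_mul_I q
      rw [habsq] at h0
      simpa using h0
    have hargne : Complex.arg q ≠ 0 := by
      intro h
      rw [h] at harg
      simp at harg
      exact hq1 harg.symm
    have hpi := Real.pi_pos
    set θ : ℝ := if 0 < Complex.arg q then Complex.arg q else Complex.arg q + 2 * Real.pi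
      with hθdef
    have hθ0 : 0 < θ := by
      rw [hθdef]
      split_ifs with h
      · exact h
      · have h1 := Complex.neg_pi_lt_arg q
        linarith
    have hθ2 : θ < 2 * Real.pi := by
      rw [hθdef]
      split_ifs with h
      · linarith [Complex.arg_le_pi q]
      · have h2 : Complex.arg q < 0 := lt_of_le_of_ne (not_lt.mp h) hargne
        linarith
    have hexpθ : Complex.exp ((θ:ℂ) * Complex.I) = q := by
      rw [hθdef]
      split_ifs with h
      · exact harg
      · push_cast
        rw [add_mul, Complex.exp_add, harg]
        rw [show ((2:ℂ) * (Real.pi:ℂ)) * Complex.I = 2 * (Real.pi:ℂ) * Complex.I from by ring,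
          Complex.exp_two_pi_mul_I, mul_one]
    set Δ : ℝ := if ε = 1 then θ else 2 * Real.pi - θ with hΔdef
    have hΔ0 : 0 < Δ := by
      rw [hΔdef]; split_ifs <;> linarith
    have hΔ2 : Δ < 2 * Real.pi := by
      rw [hΔdef]; split_ifs <;> linarith
    have hεΔ : Complex.exp (((ε * Δ : ℝ):ℂ) * Complex.I) = q := by
      rcases hεpm with h | h
      · rw [hΔdef, if_pos h, h, one_mul]
        exact hexpθ
      · rw [hΔdef, if_neg (by rw [h]; norm_num), h]
        have e1 : ((-1 * (2 * Real.pi - θ) : ℝ):ℂ) * Complex.I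
            = (θ:ℂ) * Complex.I + -(2 * (Real.pi:ℂ) * Complex.I) := by
          push_cast
          ring
        rw [e1, Complex.exp_add, hexpθ, Complex.exp_neg, Complex.exp_two_pi_mul_I]
        simp
    have harcv : arcPoint γ ε u Δ = v := by
      rw [arcPoint, hεΔ, hq, div_mul_cancel₀ _ hGu]
      ring
    refine ⟨arcPoint γ ε u '' Set.Icc 0 Δ,
      Or.inr ⟨γ, ε, Δ, hεpm, hΔ0, hΔ2, hgu, harcv, rfl, htu_arc, ?_⟩⟩
    -- the tangent at v is automatically tv
    have huγvγ : u - γ ≠ v - γ := by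
      intro h
      exact huv (sub_left_inj.mp h)
    have hkey2 := keyId (u - γ) (v - γ) (r^2) hnsqu hnsqv huγvγ (by positivity)
    have e1 : v - γ - (u - γ) = v - u := by ring
    rw [e1] at hkey2
    have htv2 : tu * ((ε:ℂ) * Complex.I * (v - γ) / ((r:ℝ):ℂ))
        = tu * tv := by
      rw [hprod, htu_arc, hnormug]
      calc ((ε:ℂ) * Complex.I * (u - γ) / ((r:ℝ):ℂ)) * ((ε:ℂ) * Complex.I * (v - γ) / ((r:ℝ):ℂ))
          = ((ε:ℂ) * (ε:ℂ)) * ((Complex.I * Complex.I) * ((u - γ) * (v - γ)) / (((r:ℝ):ℂ))^2) := by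
            ring
        _ = -((u - γ) * (v - γ)) / ((r^2 : ℝ):ℂ) := by
            rw [hε2C, Complex.I_mul_I]
            push_cast
            ring
        _ = (v - u)^2 / ((Complex.normSq (v - u) : ℝ):ℂ) := hkey2
    have htv3 := mul_left_cancel₀ htu0 htv2
    rw [← htv3, hnormvg]

/-- Property 1 of Duncan et al.: given two distinct points `u, v` on a circle `c`
(center `m`, radius `ρ`) and an angle `0 ≤ φ < π/2`, there is exactly one circular arc
(or line segment) from `u` to `v` on the same side that makes the crossing angle `φ`
with `c` at both of its endpoints.  The (signed) crossing angle with `c` is expressed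
via the tangent directions: at `u` the tangent of the arc is the counterclockwise
tangent `i(u - m)/ρ` of `c` rotated by `φ`, and at `v` it is the counterclockwise
tangent of `c` rotated by `-φ`. -/
theorem existsUnique_arc_with_crossing_angle (m : ℂ) (ρ : ℝ) (hρ : 0 < ρ) (u v : ℂ)
    (hu : dist u m = ρ) (hv : dist v m = ρ) (huv : u ≠ v) (φ : ℝ) (hφ0 : 0 ≤ φ)
    (hφ1 : φ < Real.pi / 2) :
    ∃! A : Set ℂ,
      IsArcFromTo A u v
        (Complex.exp ((φ : ℂ) * Complex.I) * (Complex.I * (u - m) / (ρ : ℂ)))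
        (Complex.exp (-(φ : ℂ) * Complex.I) * (Complex.I * (v - m) / (ρ : ℂ))) := by

  obtain ⟨A, hA⟩ := exists_arc m ρ hρ u v hu hv huv φ hφ0 hφ1
  exact ⟨A, hA, fun B hB => isArcFromTo_unique huv hB hA⟩
end

section
/- Let v₀, v₁, v₂ be vertices of a simple arc-triangle with interior angles satisfying θ₀ = θ₁ ∈ [π, 3π/2) and θ₂ = π, where the side v₀v₂ is drawn as a circular arc a₁ (not a line segment) with underlying circle c₁. Then v₀, v₁, v₂ are not collinear, the circumcircle of {v₀, v₁, v₂} equals c₁, and v₁ lies on c₁ \ a₁. -/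
open Complex Real

/-- The set of points of the arc starting at `a`, around center `γ` with orientation `ε`,
sweeping a total angle `Δ`. -/
noncomputable def arcSet (γ : ℂ) (ε : ℝ) (a : ℂ) (Δ : ℝ) : Set ℂ :=
  arcPoint γ ε a '' Set.Icc 0 Δ

/-- Tangent vector (in direction of travel) at a point `p` of a circle with center `γ`
traversed with orientation `ε`. -/
noncomputable def arcTangent (γ : ℂ) (ε : ℝ) (p : ℂ) : ℂ :=
  (ε : ℂ) * Complex.I * (p - γ)


private lemma expI_eq_one_iff (x : ℝ) :
    Complex.exp ((x:ℂ) * Complex.I) = 1 ↔ ∃ n : ℤ, x = n * (2 * π) := by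
  rw [Complex.exp_eq_one_iff]
  constructor
  · rintro ⟨n, hn⟩
    refine ⟨n, ?_⟩
    have h2 : (x:ℂ) * Complex.I = ((n * (2*π) : ℝ) : ℂ) * Complex.I := by
      rw [hn]; push_cast; ring
    have h3 := mul_right_cancel₀ Complex.I_ne_zero h2
    exact_mod_cast h3
  · rintro ⟨n, hn⟩
    exact ⟨n, by rw [hn]; push_cast; ring⟩

private lemma arcPoint_ne (g a : ℂ) (e t : ℝ) (ha : a ≠ g) (he : e = 1 ∨ e = -1)
    (ht : 0 < t) (ht' : t < 2 * π) : arcPoint g e a t ≠ a := by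
  intro h
  have h2 : Complex.exp (((e * t : ℝ):ℂ) * Complex.I) * (a - g) = 1 * (a - g) := by
    rw [one_mul]; unfold arcPoint at h; linear_combination h
  have h3 := mul_right_cancel₀ (sub_ne_zero.mpr ha) h2
  obtain ⟨n, hn⟩ := (expI_eq_one_iff _).mp h3
  have hπ := Real.pi_pos
  rcases he with he | he <;> rw [he] at hn
  · rw [one_mul] at hn
    have h0 : (0:ℝ) < (n:ℝ) := by nlinarith
    have h1 : ((n:ℝ)) < 1 := by nlinarith
    have h0' : (0:ℤ) < n := by exact_mod_cast h0
    have h1' : n < 1 := by exact_mod_cast h1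
    omega
  · rw [neg_one_mul] at hn
    have h0 : ((n:ℝ)) < 0 := by nlinarith
    have h1 : (-1:ℝ) < (n:ℝ) := by nlinarith
    have h0' : n < 0 := by exact_mod_cast h0
    have h1' : (-1:ℤ) < n := by exact_mod_cast h1
    omega


set_option maxHeartbeats 2000000 in
/-- Lemma 5 of the paper: let `v 0, v 1, v 2` be the vertices (in clockwise order,
interior on the right) of a simple arc-triangle with interior angles
`θ 0 = θ 1 ∈ [π, 3π/2)` and `θ 2 = π`, in which the side from `v 2` to `v 0`
(the side `a₁` opposite `v 1`, joining `v 0` and `v 2`) is drawn as a genuine circular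
arc (not a line segment) with underlying circle `c₁` (center `γ 2`).  Then the three
vertices are not collinear, the unique circle through them is `c₁` — in particular `v 1`
lies on `c₁` — and `v 1` lies on `c₁ \ a₁`.

Side `i` runs from `v i` to `v (i + 1)`; it is the arc with center `γ i`, orientation
`ε i` and sweep angle `Δ i`; `θ i` is the interior angle at `v i`, measured from the
outgoing tangent to the reversed incoming tangent. -/
theorem arcTriangle_apex_on_circle
    (v γ : Fin 3 → ℂ) (ε Δ θ : Fin 3 → ℝ)
    -- side `i` is a nondegenerate circular arc from `v i` to `v (i+1)`
    (hγ : ∀ i, v i ≠ γ i)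
    (hε : ∀ i, ε i = 1 ∨ ε i = -1)
    (hΔ : ∀ i, Δ i ∈ Set.Ioo 0 (2 * π))
    (hend : ∀ i, arcPoint (γ i) (ε i) (v i) (Δ i) = v (i + 1))
    -- the arc-triangle is simple: two different sides only meet in common vertices
    (hsimple : ∀ i j, i ≠ j →
      arcSet (γ i) (ε i) (v i) (Δ i) ∩ arcSet (γ j) (ε j) (v j) (Δ j) ⊆ {v 0, v 1, v 2})
    -- `θ i` is the interior angle at vertex `v i`
    (hθmem : ∀ i, θ i ∈ Set.Ico 0 (2 * π))
    (hθ : ∀ i,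
      Complex.exp ((θ i : ℂ) * Complex.I) *
          (arcTangent (γ i) (ε i) (v i) / ‖arcTangent (γ i) (ε i) (v i)‖) =
        -arcTangent (γ (i + 2)) (ε (i + 2)) (v i) / ‖arcTangent (γ (i + 2)) (ε (i + 2)) (v i)‖)
    -- the assumptions on the interior angles
    (h01 : θ 0 = θ 1) (h0mem : θ 0 ∈ Set.Ico π (3 * π / 2)) (h2 : θ 2 = π) :
    ¬ Collinear ℝ ({v 0, v 1, v 2} : Set ℂ) ∧
    dist (v 1) (γ 2) = dist (v 2) (γ 2) ∧
    v 1 ∉ arcSet (γ 2) (ε 2) (v 2) (Δ 2) := by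
  have hπ := Real.pi_pos
  -- endpoint equations with normalized indices
  have hend0 : γ 0 + Complex.exp (((ε 0 * Δ 0 : ℝ):ℂ) * Complex.I) * (v 0 - γ 0) = v 1 := by
    have h := hend 0; rw [show ((0:Fin 3)+1) = 1 from by decide] at h; exact h
  have hend1 : γ 1 + Complex.exp (((ε 1 * Δ 1 : ℝ):ℂ) * Complex.I) * (v 1 - γ 1) = v 2 := by
    have h := hend 1; rw [show ((1:Fin 3)+1) = 2 from by decide] at h; exact h
  have hend2 : γ 2 + Complex.exp (((ε 2 * Δ 2 : ℝ):ℂ) * Complex.I) * (v 2 - γ 2) = v 0 := by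
    have h := hend 2; rw [show ((2:Fin 3)+1) = 0 from by decide] at h; exact h
  set U : ℂ := Complex.exp (((ε 0 * Δ 0 : ℝ):ℂ) * Complex.I) with hU_def
  set P : ℂ := Complex.exp (((ε 1 * Δ 1 : ℝ):ℂ) * Complex.I) with hP_def
  set Q : ℂ := Complex.exp (((ε 2 * Δ 2 : ℝ):ℂ) * Complex.I) with hQ_def
  set z : ℂ := v 1 - γ 1 with hz_def
  set w : ℂ := v 2 - γ 2 with hw_def
  set x0 : ℂ := v 0 - γ 0 with hx0_def
  have hzne : z ≠ 0 := sub_ne_zero.mpr (hγ 1)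
  have hwne : w ≠ 0 := sub_ne_zero.mpr (hγ 2)
  have hx0ne : x0 ≠ 0 := sub_ne_zero.mpr (hγ 0)
  have hx1 : v 1 - γ 0 = U * x0 := by linear_combination -hend0
  have hm : v 2 - γ 1 = P * z := by linear_combination -hend1
  have hy : v 0 - γ 2 = Q * w := by linear_combination -hend2
  have hnormexp : ∀ x : ℝ, ‖Complex.exp ((x:ℂ) * Complex.I)‖ = 1 := fun x => by
    exact Complex.norm_exp_ofReal_mul_I x
  have hnx1 : ‖v 1 - γ 0‖ = ‖x0‖ := by rw [hx1, norm_mul, hnormexp, one_mul]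
  have hnm : ‖v 2 - γ 1‖ = ‖z‖ := by rw [hm, norm_mul, hnormexp, one_mul]
  have hny : ‖v 0 - γ 2‖ = ‖w‖ := by rw [hy, norm_mul, hnormexp, one_mul]
  have htan : ∀ (g p : ℂ) (i : Fin 3), ‖arcTangent g (ε i) p‖ = ‖p - g‖ := by
    intro g p i
    unfold arcTangent
    rcases hε i with h | h <;> rw [h] <;> push_cast <;>
      simp [norm_mul]
  have hεsqC : ∀ i : Fin 3, ((ε i : ℝ):ℂ) * ((ε i : ℝ):ℂ) = 1 := by
    intro i; rcases hε i with h | h <;> rw [h] <;> norm_num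
  have hwn0 : ((‖w‖:ℝ):ℂ) ≠ 0 := by exact_mod_cast (norm_ne_zero_iff.mpr hwne)
  have hzn0 : ((‖z‖:ℝ):ℂ) ≠ 0 := by exact_mod_cast (norm_ne_zero_iff.mpr hzne)
  have hxn0 : ((‖x0‖:ℝ):ℂ) ≠ 0 := by exact_mod_cast (norm_ne_zero_iff.mpr hx0ne)
  -- tangency from θ2 = π
  have hθ2 := hθ 2
  rw [show ((2:Fin 3)+2) = 1 from by decide, h2, Complex.exp_pi_mul_I] at hθ2
  rw [htan (γ 2) (v 2) 2, htan (γ 1) (v 2) 1, hnm] at hθ2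
  unfold arcTangent at hθ2
  rw [← hw_def, hm] at hθ2
  have hwa : ((‖w‖:ℝ):ℂ) ≠ 0 := by
    simpa using hwn0
  have hza : ((‖z‖:ℝ):ℂ) ≠ 0 := by
    simpa using hzn0
  have hxa : ((‖x0‖:ℝ):ℂ) ≠ 0 := by
    simpa using hxn0
  field_simp at hθ2
  have hT : w * (‖z‖:ℂ) = ((ε 1:ℝ):ℂ) * ((ε 2:ℝ):ℂ) * P * z * (‖w‖:ℂ) := by
    have h4 : Complex.I * (w * (‖z‖:ℂ)) =
        Complex.I * (((ε 1:ℝ):ℂ) * ((ε 2:ℝ):ℂ) * P * z * (‖w‖:ℂ)) := by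
      linear_combination (-((ε 2:ℝ):ℂ) * Complex.I) * hθ2 - (Complex.I * w * (‖z‖:ℂ)) * (hεsqC 2)
    exact mul_left_cancel₀ Complex.I_ne_zero h4
  have hθ0' := hθ 0
  rw [show ((0:Fin 3)+2) = 2 from by decide] at hθ0'
  rw [htan (γ 0) (v 0) 0, htan (γ 2) (v 0) 2, hny] at hθ0'
  unfold arcTangent at hθ0'
  rw [hy, ← hx0_def] at hθ0'
  have hθ1' := hθ 1
  rw [show ((1:Fin 3)+2) = 0 from by decide, ← h01] at hθ1'
  rw [htan (γ 1) (v 1) 1, htan (γ 0) (v 1) 0, hnx1] at hθ1'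
  unfold arcTangent at hθ1'
  rw [hx1, ← hz_def] at hθ1'
  field_simp at hθ0' hθ1'
  have hA : ((ε 1:ℝ):ℂ) * ((ε 2:ℝ):ℂ) * Q * w * z * (‖x0‖:ℂ)^2
      = U * x0^2 * (‖w‖:ℂ) * (‖z‖:ℂ) := by
    have hI2 : Complex.I * Complex.I = -1 := Complex.I_mul_I
    linear_combination (((ε 1:ℝ):ℂ) * z * (‖x0‖:ℂ)) * hθ0'
      - (((ε 0:ℝ):ℂ) * x0 * (‖w‖:ℂ)) * hθ1'
      + (U*x0^2*(‖w‖:ℂ)*(‖z‖:ℂ)) * (hεsqC 0)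
  -- eqI
  have hcan : (P * Q * ((‖x0‖:ℂ) * z)^2) * (‖w‖:ℂ)
      = (U * ((‖z‖:ℂ) * x0)^2) * (‖w‖:ℂ) := by
    linear_combination ((‖z‖:ℂ)) * hA
      - (((ε 1:ℝ):ℂ)*((ε 2:ℝ):ℂ)*Q*z*(‖x0‖:ℂ)^2) * hT
      - (((ε 2:ℝ):ℂ)*((ε 2:ℝ):ℂ)*P*Q*z^2*(‖x0‖:ℂ)^2*(‖w‖:ℂ)) * (hεsqC 1)
      - (P*Q*z^2*(‖x0‖:ℂ)^2*(‖w‖:ℂ)) * (hεsqC 2)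
  have eqI : P * Q * ((‖x0‖:ℂ) * z)^2 = U * ((‖z‖:ℂ) * x0)^2 :=
    mul_right_cancel₀ hwa hcan
  -- half-angle quantities
  set ct : ℝ := Real.cos (ε 0 * Δ 0 / 2) with hct_def
  set st : ℝ := Real.sin (ε 0 * Δ 0 / 2) with hst_def
  set cu : ℝ := Real.cos (ε 1 * Δ 1 / 2) with hcu_def
  set su : ℝ := Real.sin (ε 1 * Δ 1 / 2) with hsu_def
  set cv : ℝ := Real.cos (ε 2 * Δ 2 / 2) with hcv_def
  set sv : ℝ := Real.sin (ε 2 * Δ 2 / 2) with hsv_def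
  set A : ℂ := Complex.exp (((ε 1 * Δ 1 / 2 : ℝ):ℂ) * Complex.I) with hA_def
  set B : ℂ := Complex.exp (((ε 2 * Δ 2 / 2 : ℝ):ℂ) * Complex.I) with hB_def
  set F : ℂ := Complex.exp (((ε 0 * Δ 0 / 2 : ℝ):ℂ) * Complex.I) with hF_def
  have hAA : A * A = P := by
    rw [hA_def, hP_def, ← Complex.exp_add]; congr 1; push_cast; ring
  have hBB : B * B = Q := by
    rw [hB_def, hQ_def, ← Complex.exp_add]; congr 1; push_cast; ring
  have hFF : F * F = U := by
    rw [hF_def, hU_def, ← Complex.exp_add]; congr 1; push_cast; ring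
  have hfac : (A*B*((‖x0‖:ℂ)*z) - F*((‖z‖:ℂ)*x0))
      * (A*B*((‖x0‖:ℂ)*z) + F*((‖z‖:ℂ)*x0)) = 0 := by
    linear_combination eqI + (B*B*((‖x0‖:ℂ)*z)^2)*hAA
      + (P*((‖x0‖:ℂ)*z)^2)*hBB - (((‖z‖:ℂ)*x0)^2)*hFF
  obtain ⟨dd, hdd, hFx⟩ : ∃ dd : ℝ, (dd = 1 ∨ dd = -1) ∧
      F*((‖z‖:ℂ)*x0) = ((dd:ℝ):ℂ)*(A*B*((‖x0‖:ℂ)*z)) := by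
    rcases mul_eq_zero.mp hfac with h | h
    · exact ⟨1, Or.inl rfl, by push_cast; linear_combination -h⟩
    · exact ⟨-1, Or.inr rfl, by push_cast; linear_combination h⟩
  have eqV : (U - 1) * x0 = (1 - P) * z + (1 - Q) * w := by
    linear_combination hend0 + hend1 + hend2 - hz_def - hw_def - hx0_def
  rw [← hAA, ← hBB, ← hFF] at eqV
  rw [← hAA] at hT
  have step : ((((dd:ℝ):ℂ))*((F*F-1)*A*B*(‖x0‖:ℂ))) * z
      = (F*(1-A*A)*(‖z‖:ℂ)
          + ((ε 1:ℝ):ℂ)*((ε 2:ℝ):ℂ)*F*(A*A)*(1-B*B)*(‖w‖:ℂ)) * z := by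
    linear_combination (F*(‖z‖:ℂ))*eqV - (F*F-1)*hFx + F*(1-B*B)*hT
  have eqIII := mul_right_cancel₀ hzne step
  have hAeq : A = ((cu:ℝ):ℂ) + ((su:ℝ):ℂ) * Complex.I := by
    rw [hA_def, Complex.exp_mul_I, hcu_def, hsu_def]; push_cast; ring
  have hBeq : B = ((cv:ℝ):ℂ) + ((sv:ℝ):ℂ) * Complex.I := by
    rw [hB_def, Complex.exp_mul_I, hcv_def, hsv_def]; push_cast; ring
  have hFeq : F = ((ct:ℝ):ℂ) + ((st:ℝ):ℂ) * Complex.I := by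
    rw [hF_def, Complex.exp_mul_I, hct_def, hst_def]; push_cast; ring
  rw [hAeq, hBeq, hFeq] at eqIII
  have eqM : ((((dd:ℝ):ℂ))*(((((ct:ℝ):ℂ) + ((st:ℝ):ℂ) * Complex.I)*(((ct:ℝ):ℂ) + ((st:ℝ):ℂ) * Complex.I)-1)*(((cu:ℝ):ℂ) + ((su:ℝ):ℂ) * Complex.I)*(((cv:ℝ):ℂ) + ((sv:ℝ):ℂ) * Complex.I)*(‖x0‖:ℂ)))
      * ((((ct:ℝ):ℂ) - ((st:ℝ):ℂ) * Complex.I) * (((cu:ℝ):ℂ) - ((su:ℝ):ℂ) * Complex.I) * (((cv:ℝ):ℂ) - ((sv:ℝ):ℂ) * Complex.I))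
      = ((((ct:ℝ):ℂ) + ((st:ℝ):ℂ) * Complex.I)*(1-(((cu:ℝ):ℂ) + ((su:ℝ):ℂ) * Complex.I)*(((cu:ℝ):ℂ) + ((su:ℝ):ℂ) * Complex.I))*(‖z‖:ℂ)
          + ((ε 1:ℝ):ℂ)*((ε 2:ℝ):ℂ)*(((ct:ℝ):ℂ) + ((st:ℝ):ℂ) * Complex.I)*((((cu:ℝ):ℂ) + ((su:ℝ):ℂ) * Complex.I)*(((cu:ℝ):ℂ) + ((su:ℝ):ℂ) * Complex.I))*(1-(((cv:ℝ):ℂ) + ((sv:ℝ):ℂ) * Complex.I)*(((cv:ℝ):ℂ) + ((sv:ℝ):ℂ) * Complex.I))*(‖w‖:ℂ))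
      * ((((ct:ℝ):ℂ) - ((st:ℝ):ℂ) * Complex.I) * (((cu:ℝ):ℂ) - ((su:ℝ):ℂ) * Complex.I) * (((cv:ℝ):ℂ) - ((sv:ℝ):ℂ) * Complex.I)) := by
    rw [eqIII]
  have hre := congrArg Complex.re eqM
  simp only [Complex.add_re, Complex.add_im, Complex.sub_re, Complex.sub_im,
    Complex.mul_re, Complex.mul_im, Complex.one_re, Complex.one_im,
    Complex.I_re, Complex.I_im, Complex.ofReal_re, Complex.ofReal_im,
    mul_zero, zero_mul, mul_one, one_mul, sub_zero, zero_sub, add_zero, zero_add,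
    neg_zero, neg_neg, neg_mul, mul_neg] at hre
  have pt : st^2 + ct^2 = 1 := by
    rw [hst_def, hct_def]; exact Real.sin_sq_add_cos_sq _
  have pu : su^2 + cu^2 = 1 := by
    rw [hsu_def, hcu_def]; exact Real.sin_sq_add_cos_sq _
  have pv : sv^2 + cv^2 = 1 := by
    rw [hsv_def, hcv_def]; exact Real.sin_sq_add_cos_sq _
  have hkey : su * sv * ((‖z‖) - (ε 1 * ε 2) * (‖w‖)) = 0 := by
    linear_combination (1/2) * hre
      - (1/2) * (1*su*sv*(‖z‖) + (-1)*su^3*sv*(‖w‖)*(ε 1 * ε 2) + 1*su^3*sv*(‖z‖) + (-1)*su^3*sv^3*(‖w‖)*(ε 1 * ε 2) + (-1)*su^3*cv^2*sv*(‖w‖)*(ε 1 * ε 2) + (-1)*cu*cv*(‖z‖) + (-1)*cu*su^2*cv*(‖w‖)*(ε 1 * ε 2) + 1*cu*su^2*cv*(‖z‖) + 1*cu*su^2*cv*sv^2*(‖w‖)*(ε 1 * ε 2) + 1*cu*su^2*cv^3*(‖w‖)*(ε 1 * ε 2) + (-1)*cu^2*su*sv*(‖w‖)*(ε 1 * ε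 2) + 1*cu^2*su*sv*(‖z‖) + (-1)*cu^2*su*sv^3*(‖w‖)*(ε 1 * ε 2) + (-1)*cu^2*su*cv^2*sv*(‖w‖)*(ε 1 * ε 2) + (-1)*cu^3*cv*(‖w‖)*(ε 1 * ε 2) + 1*cu^3*cv*(‖z‖) + 1*cu^3*cv*sv^2*(‖w‖)*(ε 1 * ε 2) + 1*cu^3*cv^3*(‖w‖)*(ε 1 * ε 2) + 1*ct*su^2*sv^2*(‖x0‖)*dd + 1*ct*su^2*cv^2*(‖x0‖)*dd + 1*ct*cu^2*sv^2*(‖x0‖)*dd + 1*ct*cu^2*cv^2*(‖x0‖)*dd) * pt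
      - (1/2) * ((-1)*su*sv*(‖w‖)*(ε 1 * ε 2) + 1*su*sv*(‖z‖) + (-1)*su*sv^3*(‖w‖)*(ε 1 * ε 2) + (-1)*su*cv^2*sv*(‖w‖)*(ε 1 * ε 2) + (-1)*cu*cv*(‖w‖)*(ε 1 * ε 2) + 1*cu*cv*(‖z‖) + 1*cu*cv*sv^2*(‖w‖)*(ε 1 * ε 2) + 1*cu*cv^3*(‖w‖)*(ε 1 * ε 2)) * pu
      - (1/2) * ((-1)*su*sv*(‖w‖)*(ε 1 * ε 2) + 1*cu*cv*(‖w‖)*(ε 1 * ε 2)) * pv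
  clear hre eqM eqIII step eqV eqI hcan hA hfac hθ0' hθ1' hθ2
  have hazpos : 0 < ‖z‖ := norm_pos_iff.mpr hzne
  have hawpos : 0 < ‖w‖ := norm_pos_iff.mpr hwne
  have hsinne : ∀ i : Fin 3, Real.sin (ε i * Δ i / 2) ≠ 0 := by
    intro i
    have h1 : 0 < Δ i / 2 := by have := (hΔ i).1; linarith
    have h2' : Δ i / 2 < π := by have := (hΔ i).2; linarith
    have hpos : 0 < Real.sin (Δ i / 2) := Real.sin_pos_of_pos_of_lt_pi h1 h2'
    rcases hε i with h | h <;> rw [h]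
    · rw [one_mul]; linarith
    · rw [show (-1) * Δ i / 2 = -(Δ i / 2) by ring, Real.sin_neg]; linarith
  have hsu : su ≠ 0 := by rw [hsu_def]; exact hsinne 1
  have hsv : sv ≠ 0 := by rw [hsv_def]; exact hsinne 2
  have h5 : ‖z‖ - (ε 1 * ε 2) * ‖w‖ = 0 := by
    rcases mul_eq_zero.mp hkey with h | h
    · rcases mul_eq_zero.mp h with h' | h'
      · exact absurd h' hsu
      · exact absurd h' hsv
    · exact h
  have hee : ε 1 = ε 2 := by
    rcases hε 1 with h1e | h1e <;> rcases hε 2 with h2e | h2e <;>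
      rw [h1e, h2e] at h5 ⊢ <;> exfalso <;> nlinarith [hazpos, hawpos]
  have hprod : ε 1 * ε 2 = 1 := by
    rw [hee]; rcases hε 2 with h | h <;> rw [h] <;> norm_num
  have hzw : ‖z‖ = ‖w‖ := by
    rw [hprod] at h5; linarith
  have hprodC : ((ε 1:ℝ):ℂ) * ((ε 2:ℝ):ℂ) = 1 := by exact_mod_cast hprod
  have hzwC : ((‖z‖:ℝ):ℂ) = ((‖w‖:ℝ):ℂ) := by exact_mod_cast hzw
  have hPz : w = (A*A) * z := by
    have h6 : w * ((‖w‖:ℝ):ℂ) = ((A*A) * z) * ((‖w‖:ℝ):ℂ) := by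
      linear_combination hT - w * hzwC + (A*A)*z*((‖w‖:ℝ):ℂ)*hprodC
    exact mul_right_cancel₀ hwa h6
  have hγ12 : γ 1 = γ 2 := by linear_combination -hm - hw_def + hPz + z*hAA
  -- distinctness of vertices
  have harc0 : arcPoint (γ 0) (ε 0) (v 0) (Δ 0) = v 1 := by
    have h := hend 0; rw [show ((0:Fin 3)+1) = 1 from by decide] at h; exact h
  have harc1 : arcPoint (γ 1) (ε 1) (v 1) (Δ 1) = v 2 := by
    have h := hend 1; rw [show ((1:Fin 3)+1) = 2 from by decide] at h; exact h
  have harc2 : arcPoint (γ 2) (ε 2) (v 2) (Δ 2) = v 0 := by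
    have h := hend 2; rw [show ((2:Fin 3)+1) = 0 from by decide] at h; exact h
  have hne10 : v 1 ≠ v 0 := by
    have h := arcPoint_ne (γ 0) (v 0) (ε 0) (Δ 0) (hγ 0) (hε 0) (hΔ 0).1 (hΔ 0).2
    rw [harc0] at h; exact h
  have hne21 : v 2 ≠ v 1 := by
    have h := arcPoint_ne (γ 1) (v 1) (ε 1) (Δ 1) (hγ 1) (hε 1) (hΔ 1).1 (hΔ 1).2
    rw [harc1] at h; exact h
  have hne02 : v 0 ≠ v 2 := by
    have h := arcPoint_ne (γ 2) (v 2) (ε 2) (Δ 2) (hγ 2) (hε 2) (hΔ 2).1 (hΔ 2).2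
    rw [harc2] at h; exact h
  refine ⟨?_, ?_, ?_⟩
  · -- not collinear
    intro hcol
    rw [collinear_iff_of_mem (show v 0 ∈ ({v 0, v 1, v 2} : Set ℂ) from Set.mem_insert _ _)] at hcol
    obtain ⟨dv, hdv⟩ := hcol
    obtain ⟨r1, hr1⟩ := hdv (v 1) (by simp)
    obtain ⟨r2, hr2⟩ := hdv (v 2) (by simp)
    have habsv1 : ‖v 1 - γ 2‖ = ‖w‖ := by
      rw [← hγ12, ← hz_def, hzw]
    have habsv0 : ‖v 0 - γ 2‖ = ‖w‖ := by
      rw [hy, norm_mul, hQ_def, Complex.norm_exp_ofReal_mul_I, one_mul]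
    have habsv2 : ‖v 2 - γ 2‖ = ‖w‖ := by rw [← hw_def]
    have hc1 : v 1 - γ 2 = (r1:ℂ)*dv + (v 0 - γ 2) := by
      rw [hr1]; simp only [vadd_eq_add, Complex.real_smul]; ring
    have hc2 : v 2 - γ 2 = (r2:ℂ)*dv + (v 0 - γ 2) := by
      rw [hr2]; simp only [vadd_eq_add, Complex.real_smul]; ring
    have e1 : Complex.normSq ((r1:ℂ)*dv + (v 0 - γ 2)) = Complex.normSq (v 0 - γ 2) := by
      rw [← Complex.sq_norm, ← Complex.sq_norm, ← hc1, habsv1, habsv0]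
    have e2 : Complex.normSq ((r2:ℂ)*dv + (v 0 - γ 2)) = Complex.normSq (v 0 - γ 2) := by
      rw [← Complex.sq_norm, ← Complex.sq_norm, ← hc2, habsv2, habsv0]
    rw [Complex.normSq_add, Complex.normSq_mul, Complex.normSq_ofReal] at e1 e2
    have hre1 : ((r1:ℂ)*dv*(starRingEnd ℂ) (v 0 - γ 2)).re
        = r1*((dv*(starRingEnd ℂ) (v 0 - γ 2)).re) := by
      rw [mul_assoc, Complex.re_ofReal_mul]
    have hre2 : ((r2:ℂ)*dv*(starRingEnd ℂ) (v 0 - γ 2)).re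
        = r2*((dv*(starRingEnd ℂ) (v 0 - γ 2)).re) := by
      rw [mul_assoc, Complex.re_ofReal_mul]
    rw [hre1] at e1
    rw [hre2] at e2
    have hr1ne : r1 ≠ 0 := by
      intro h; rw [h] at hr1; simp at hr1; exact hne10 hr1
    have hr2ne : r2 ≠ 0 := by
      intro h; rw [h] at hr2; simp at hr2; exact hne02 hr2.symm
    have hr12 : r1 ≠ r2 := by
      intro h; rw [h, ← hr2] at hr1; exact hne21 hr1.symm
    have key5 : r1*r2*Complex.normSq dv*(r1-r2) = 0 := by linear_combination r2*e1 - r1*e2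
    have hN : Complex.normSq dv = 0 := by
      rcases mul_eq_zero.mp key5 with h | h
      · rcases mul_eq_zero.mp h with h' | h'
        · rcases mul_eq_zero.mp h' with h'' | h''
          · exact absurd h'' hr1ne
          · exact absurd h'' hr2ne
        · exact h'
      · exact absurd h (sub_ne_zero.mpr hr12)
    have hdv0 : dv = 0 := Complex.normSq_eq_zero.mp hN
    rw [hdv0] at hr1; simp at hr1; exact hne10 hr1
  · -- dist equality
    rw [Complex.dist_eq, Complex.dist_eq, ← hw_def, ← hγ12, ← hz_def]
    exact hzw
  · -- v 1 not on the arc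
    intro hmem
    unfold arcSet at hmem
    obtain ⟨t0, ht0mem, ht0arc⟩ := hmem
    have ht0u := ht0arc
    unfold arcPoint at ht0u
    rw [← hw_def] at ht0u
    set E2 : ℂ := Complex.exp (((ε 2 * t0:ℝ):ℂ) * Complex.I) with hE2_def
    have h7 : (E2 * (A*A)) * z = (1:ℂ) * z := by
      linear_combination ht0u - E2*hPz - hz_def + hγ12
    have h8 : E2 * (A*A) = 1 := mul_right_cancel₀ hzne h7
    have h9 : Complex.exp ((((ε 2 * t0 + ε 1 * Δ 1):ℝ):ℂ) * Complex.I) = 1 := by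
      rw [show ((((ε 2 * t0 + ε 1 * Δ 1):ℝ)):ℂ) * Complex.I
          = ((ε 2 * t0:ℝ):ℂ) * Complex.I + ((ε 1 * Δ 1:ℝ):ℂ) * Complex.I by push_cast; ring,
        Complex.exp_add, ← hE2_def, ← hP_def, ← hAA]
      exact h8
    obtain ⟨n, hn⟩ := (expI_eq_one_iff _).mp h9
    have hΔ1b := hΔ 1
    have hΔ2b := hΔ 2
    have ht0Δ : t0 + Δ 1 = 2*π := by
      rw [hee] at hn
      rcases hε 2 with h2e | h2e <;> rw [h2e] at hn
      · have hb1 : (0:ℝ) < n := by nlinarith [ht0mem.1, hΔ1b.1]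
        have hb2 : (n:ℝ) < 2 := by nlinarith [ht0mem.2, hΔ1b.2, hΔ2b.2]
        have hb1' : (0:ℤ) < n := by exact_mod_cast hb1
        have hb2' : (n:ℤ) < 2 := by exact_mod_cast hb2
        have : n = 1 := by omega
        rw [this] at hn; push_cast at hn; linarith
      · have hb1 : (n:ℝ) < 0 := by nlinarith [ht0mem.1, hΔ1b.1]
        have hb2 : (-2:ℝ) < n := by nlinarith [ht0mem.2, hΔ1b.2, hΔ2b.2]
        have hb1' : (n:ℤ) < 0 := by exact_mod_cast hb1
        have hb2' : (-2:ℤ) < n := by exact_mod_cast hb2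
        have : n = -1 := by omega
        rw [this] at hn; push_cast at hn; linarith
    rcases eq_or_lt_of_le ht0mem.2 with heq | hlt
    · rw [heq, harc2] at ht0arc
      exact hne10 ht0arc.symm
    · -- Δ 1 + Δ 2 > 2π : arcs 1 and 2 overlap in infinitely many points
      have hover : 2*π < Δ 1 + Δ 2 := by linarith
      set mm := min (Δ 1 + Δ 2 - 2*π) (Δ 1) with hmm_def
      have hmm0 : 0 < mm := lt_min (by linarith) hΔ1b.1
      have hmmΔ1 : mm ≤ Δ 1 := min_le_right _ _
      have hper : Complex.exp (((ε 2 * (2*π):ℝ):ℂ) * Complex.I) = 1 := by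
        apply (expI_eq_one_iff _).mpr
        rcases hε 2 with h | h
        · exact ⟨1, by rw [h]; push_cast; ring⟩
        · exact ⟨-1, by rw [h]; push_cast; ring⟩
      have hsub : (fun x => arcPoint (γ 1) (ε 1) (v 1) x) '' Set.Icc 0 mm ⊆ {v 0, v 1, v 2} := by
        intro p hp
        obtain ⟨x, hx, rfl⟩ := hp
        apply hsimple 1 2 (by decide)
        constructor
        · exact ⟨x, ⟨hx.1, le_trans hx.2 hmmΔ1⟩, rfl⟩
        · refine ⟨x + (2*π - Δ 1), ⟨by linarith [hx.1, hΔ1b.2], ?_⟩, ?_⟩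
          · have := le_trans hx.2 (min_le_left _ _); linarith
          · have hkey2 : Complex.exp (((ε 2 * (x + (2*π - Δ 1)):ℝ):ℂ) * Complex.I) * (A*A)
                = Complex.exp (((ε 1 * x:ℝ):ℂ) * Complex.I) := by
              rw [hAA, hP_def, ← Complex.exp_add, hee,
                show ((ε 2 * (x + (2*π - Δ 1)):ℝ):ℂ) * Complex.I + ((ε 2 * Δ 1:ℝ):ℂ) * Complex.I
                  = ((ε 2 * x:ℝ):ℂ) * Complex.I + ((ε 2 * (2*π):ℝ):ℂ) * Complex.I by push_cast; ring,
                Complex.exp_add, hper, mul_one]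
            unfold arcPoint
            linear_combination -Complex.exp (((ε 2 * (x + (2*π - Δ 1)):ℝ):ℂ) * Complex.I) * hw_def
              + Complex.exp (((ε 1 * x:ℝ):ℂ) * Complex.I) * hz_def
              + Complex.exp (((ε 2 * (x + (2*π - Δ 1)):ℝ):ℂ) * Complex.I) * hPz
              + z * hkey2 - hγ12
      have hinj : Set.InjOn (fun x => arcPoint (γ 1) (ε 1) (v 1) x) (Set.Icc 0 mm) := by
        intro x hx y hy hxy
        simp only [] at hxy
        unfold arcPoint at hxy
        have h10 : Complex.exp (((ε 1 * x:ℝ):ℂ) * Complex.I) * z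
            = Complex.exp (((ε 1 * y:ℝ):ℂ) * Complex.I) * z := by
          linear_combination hxy + (Complex.exp (((ε 1 * x:ℝ):ℂ) * Complex.I)
            - Complex.exp (((ε 1 * y:ℝ):ℂ) * Complex.I)) * hz_def
        have h11 : Complex.exp (((ε 1 * x:ℝ):ℂ) * Complex.I)
            = Complex.exp (((ε 1 * y:ℝ):ℂ) * Complex.I) := mul_right_cancel₀ hzne h10
        have h12 : Complex.exp (((ε 1 * x - ε 1 * y:ℝ):ℂ) * Complex.I) = 1 := by
          rw [show ((ε 1 * x - ε 1 * y:ℝ):ℂ) * Complex.I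
              = ((ε 1 * x:ℝ):ℂ) * Complex.I - ((ε 1 * y:ℝ):ℂ) * Complex.I by push_cast; ring,
            Complex.exp_sub, h11, div_self (Complex.exp_ne_zero _)]
        obtain ⟨n, hn⟩ := (expI_eq_one_iff _).mp h12
        have hxb : x ≤ mm := hx.2
        have hyb : y ≤ mm := hy.2
        have hmm2π : mm < 2*π := lt_of_le_of_lt hmmΔ1 hΔ1b.2
        rcases hε 1 with h1e | h1e <;> rw [h1e] at hn
        · have hb1 : (-1:ℝ) < n := by nlinarith [hx.1, hy.1]
          have hb2 : (n:ℝ) < 1 := by nlinarith [hx.1, hy.1]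
          have hb1' : (-1:ℤ) < n := by exact_mod_cast hb1
          have hb2' : (n:ℤ) < 1 := by exact_mod_cast hb2
          have : n = 0 := by omega
          rw [this] at hn; push_cast at hn; linarith
        · have hb1 : (-1:ℝ) < n := by nlinarith [hx.1, hy.1]
          have hb2 : (n:ℝ) < 1 := by nlinarith [hx.1, hy.1]
          have hb1' : (-1:ℤ) < n := by exact_mod_cast hb1
          have hb2' : (n:ℤ) < 1 := by exact_mod_cast hb2
          have : n = 0 := by omega
          rw [this] at hn; push_cast at hn; linarith
      have hfin : ({v 0, v 1, v 2} : Set ℂ).Finite := Set.toFinite _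
      exact ((Set.Icc_infinite hmm0).image hinj) (hfin.subset hsub)
end

section
/- Let a₁ and a₂ be two circular arcs with underlying circles c₁, c₂ of radii r₁ ≥ r₂, having a unique proper (transversal) intersection point p. Then there exists r₀ > 0 such that for every radius 0 < r < r₀ there is a circle of radius r orthogonal to both c₁ and c₂ whose interior contains p. -/
set_option maxHeartbeats 1000000


/-- Let two circles (centers `m₁, m₂`, radii `r₁ ≥ r₂ > 0`) cross transversally (i.e.
`r₁ - r₂ < dist m₁ m₂ < r₁ + r₂`), and let `p` be an intersection point of the two
circles (a proper intersection of two arcs on them). Then there is `r₀ > 0` such that for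
every radius `0 < r < r₀` there is a circle of radius `r` orthogonal to both circles
whose interior contains `p`. -/
theorem exists_small_orthogonal_circle_around_intersection
    (m₁ m₂ : EuclideanSpace ℝ (Fin 2)) (r₁ r₂ : ℝ) (h₂ : 0 < r₂) (h₁₂ : r₂ ≤ r₁)
    (hd₁ : r₁ - r₂ < dist m₁ m₂) (hd₂ : dist m₁ m₂ < r₁ + r₂)
    (p : EuclideanSpace ℝ (Fin 2)) (hp₁ : dist p m₁ = r₁) (hp₂ : dist p m₂ = r₂) :
    ∃ r₀ > 0, ∀ r : ℝ, 0 < r → r < r₀ →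
      ∃ m : EuclideanSpace ℝ (Fin 2),
        dist m m₁ ^ 2 = r₁ ^ 2 + r ^ 2 ∧ dist m m₂ ^ 2 = r₂ ^ 2 + r ^ 2 ∧ dist p m < r := by
  set d := dist m₁ m₂ with hdd
  have hd0 : 0 < d := lt_of_le_of_lt (by linarith) hd₁
  set u : EuclideanSpace ℝ (Fin 2) := p - m₁ with hu
  set w : EuclideanSpace ℝ (Fin 2) := m₂ - m₁ with hw
  have hnu : ‖u‖ = r₁ := by rw [hu, ← dist_eq_norm]; exact hp₁
  have hnw : ‖w‖ = d := by rw [hw, ← dist_eq_norm, dist_comm]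
  have hnuw : ‖u - w‖ = r₂ := by
    have : u - w = p - m₂ := by rw [hu, hw]; abel
    rw [this, ← dist_eq_norm]; exact hp₂
  -- inner product ⟪u, w⟫
  have hiuw : inner ℝ u w = (r₁ ^ 2 + d ^ 2 - r₂ ^ 2) / 2 := by
    have := norm_sub_sq_real u w
    rw [hnu, hnw, hnuw] at this
    linarith
  set v : EuclideanSpace ℝ (Fin 2) := !₂[-(w 1), w 0] with hv
  have hvw : inner ℝ v w = (0 : ℝ) := by
    simp [hv, PiLp.inner_apply, Fin.sum_univ_two, RCLike.inner_apply]; ring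
  have hvv : inner ℝ v v = (d : ℝ) ^ 2 := by
    have h1 : inner ℝ v v = (inner ℝ w w : ℝ) := by
      simp [hv, PiLp.inner_apply, Fin.sum_univ_two, RCLike.inner_apply, -inner_self_eq_norm_sq_to_K]; ring
    rw [h1, real_inner_self_eq_norm_sq, hnw]
  set a : ℝ := inner ℝ v u with ha
  -- Lagrange identity in 2D
  have hlag : a ^ 2 + (inner ℝ u w : ℝ) ^ 2 = r₁ ^ 2 * d ^ 2 := by
    have h1 : a ^ 2 + (inner ℝ u w : ℝ) ^ 2 =
        ((inner ℝ u u : ℝ)) * ((inner ℝ w w : ℝ)) := by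
      simp only [ha, hv, PiLp.inner_apply, Fin.sum_univ_two, RCLike.inner_apply,
        starRingEnd_apply, star_trivial, Matrix.cons_val_zero, Matrix.cons_val_one,
        Matrix.head_cons]
      ring
    rw [h1, real_inner_self_eq_norm_sq, real_inner_self_eq_norm_sq, hnu, hnw]
  have ha2 : 0 < a ^ 2 := by
    rw [hiuw] at hlag
    have e : a ^ 2 = ((d - (r₁ - r₂)) * ((r₁ + r₂) - d) * ((r₁ + d) - r₂) *
        ((r₁ + d) + r₂)) / 4 := by linear_combination hlag
    rw [e]
    have f1 : 0 < d - (r₁ - r₂) := by linarith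
    have f2 : 0 < (r₁ + r₂) - d := by linarith
    have f3 : 0 < (r₁ + d) - r₂ := by linarith
    have f4 : 0 < (r₁ + d) + r₂ := by linarith
    positivity
  have ha0 : a ≠ 0 := fun h => by simp [h] at ha2
  set c : ℝ := |a| with hc
  have hc0 : 0 < c := abs_pos.mpr ha0
  set v' : EuclideanSpace ℝ (Fin 2) := if 0 ≤ a then v else -v with hv'
  have hv'w : inner ℝ v' w = (0 : ℝ) := by
    rw [hv']; split <;> simp [hvw]
  have hv'v' : inner ℝ v' v' = (d : ℝ) ^ 2 := by
    rw [hv']; split <;> simp [hvv, -inner_self_eq_norm_sq_to_K]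
  have hv'u : inner ℝ v' u = c := by
    rw [hv', hc]
    split
    · rw [← ha, abs_of_nonneg ‹_›]
    · rw [inner_neg_left, ← ha, abs_of_neg (lt_of_not_ge ‹_›)]
  refine ⟨1, one_pos, fun r hr _ => ?_⟩
  set s : ℝ := Real.sqrt (c ^ 2 + d ^ 2 * r ^ 2) with hs
  have hs2 : s ^ 2 = c ^ 2 + d ^ 2 * r ^ 2 := Real.sq_sqrt (by positivity)
  have hs0 : 0 ≤ s := Real.sqrt_nonneg _
  have hsc : c < s := by nlinarith [mul_pos hd0 hr]
  have hsdr : d * r ≤ s := by nlinarith [sq_nonneg c]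
  set t : ℝ := (s - c) / d ^ 2 with ht
  have ht0 : 0 < t := div_pos (by linarith) (by positivity)
  have hkey : t ^ 2 * d ^ 2 + 2 * t * c = r ^ 2 := by
    rw [ht]; field_simp; nlinarith [hs2]
  have hv'u2 : inner ℝ u v' = c := by rw [real_inner_comm]; exact hv'u
  have hv'w2 : inner ℝ w v' = (0 : ℝ) := by rw [real_inner_comm]; exact hv'w
  have hnv' : ‖v'‖ = d := by
    have h := hv'v'
    rw [real_inner_self_eq_norm_sq] at h
    rw [← Real.sqrt_sq (norm_nonneg v'), h, Real.sqrt_sq hd0.le]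
  refine ⟨p + t • v', ?_, ?_, ?_⟩
  · have h1 : p + t • v' - m₁ = u + t • v' := by rw [hu]; abel
    rw [dist_eq_norm, h1, norm_add_sq_real, real_inner_smul_right, hv'u2, norm_smul,
      Real.norm_eq_abs, hnv', hnu, mul_pow, sq_abs]
    linear_combination hkey
  · have h1 : p + t • v' - m₂ = (u - w) + t • v' := by rw [hu, hw]; abel
    rw [dist_eq_norm, h1, norm_add_sq_real, inner_sub_left, real_inner_smul_right,
      real_inner_smul_right, hv'u2, hv'w2, norm_smul, Real.norm_eq_abs, hnv', hnuw,
      mul_pow, sq_abs]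
    linear_combination hkey
  · rw [dist_self_add_right, norm_smul, Real.norm_eq_abs, hnv', abs_of_pos ht0]
    have hsq : (t * d) ^ 2 < r ^ 2 := by
      have e : (t * d) ^ 2 = r ^ 2 - 2 * t * c := by linear_combination hkey
      have h2 : 0 < 2 * t * c := by positivity
      linarith
    exact lt_of_pow_lt_pow_left₀ 2 hr.le hsq
end

section
/- Two distinct circles c₁ and c₂ both orthogonal to the unit circle intersect in at most one point inside the open unit disk D. -/
private lemma ortho_key (a0 a1 b0 b1 p0 p1 q0 q1 r1 r2 : ℝ)
    (h1 : (p0 - a0)^2 + (p1 - a1)^2 = r1^2)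
    (h2 : (p0 - b0)^2 + (p1 - b1)^2 = r2^2)
    (h3 : (q0 - a0)^2 + (q1 - a1)^2 = r1^2)
    (h4 : (q0 - b0)^2 + (q1 - b1)^2 = r2^2)
    (o1 : a0^2 + a1^2 = 1 + r1^2) (o2 : b0^2 + b1^2 = 1 + r2^2)
    (hp : p0^2 + p1^2 < 1) (hq : q0^2 + q1^2 < 1)
    (hd : ¬(a0 = b0 ∧ a1 = b1)) :
    p0 = q0 ∧ p1 = q1 := by
  have e1 : 2*(p0*a0 + p1*a1) = p0^2 + p1^2 + 1 := by linear_combination o1 - h1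
  have e2 : 2*(p0*b0 + p1*b1) = p0^2 + p1^2 + 1 := by linear_combination o2 - h2
  have f1 : 2*(q0*a0 + q1*a1) = q0^2 + q1^2 + 1 := by linear_combination o1 - h3
  have f2 : 2*(q0*b0 + q1*b1) = q0^2 + q1^2 + 1 := by linear_combination o2 - h4
  have gp : p0*(a0 - b0) + p1*(a1 - b1) = 0 := by linear_combination (e1 - e2)/2
  have gq : q0*(a0 - b0) + q1*(a1 - b1) = 0 := by linear_combination (f1 - f2)/2
  have cross : p0*q1 - p1*q0 = 0 := by
    by_cases h : a0 = b0
    · have h' : a1 ≠ b1 := fun h1' => hd ⟨h, h1'⟩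
      have h'' : a1 - b1 ≠ 0 := sub_ne_zero.mpr h'
      have : (p0*q1 - p1*q0) * (a1 - b1) = 0 := by
        linear_combination p0 * gq - q0 * gp
      rcases mul_eq_zero.mp this with h3 | h3
      · exact h3
      · exact absurd h3 h''
    · have h'' : a0 - b0 ≠ 0 := sub_ne_zero.mpr h
      have : (p0*q1 - p1*q0) * (a0 - b0) = 0 := by
        linear_combination q1 * gp - p1 * gq
      rcases mul_eq_zero.mp this with h3 | h3
      · exact h3
      · exact absurd h3 h''
  have hpn : 0 < p0^2 + p1^2 := by
    rcases lt_or_eq_of_le (by positivity : (0:ℝ) ≤ p0^2 + p1^2) with h | h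
    · exact h
    · exfalso
      have h0 : p0^2 = 0 := by nlinarith [sq_nonneg p0, sq_nonneg p1]
      have h1' : p1^2 = 0 := by nlinarith [sq_nonneg p0, sq_nonneg p1]
      have hp0 : p0 = 0 := by
        exact pow_eq_zero_iff (two_ne_zero) |>.mp h0
      have hp1 : p1 = 0 := by
        exact pow_eq_zero_iff (two_ne_zero) |>.mp h1'
      rw [hp0, hp1] at e1; linarith
  have hpn' : p0^2 + p1^2 ≠ 0 := ne_of_gt hpn
  obtain ⟨t, ht⟩ : ∃ t : ℝ, t = (q0*p0 + q1*p1)/(p0^2 + p1^2) := ⟨_, rfl⟩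
  have hq0 : q0 = t * p0 := by
    rw [ht]; field_simp
    linear_combination (-p1) * cross
  have hq1 : q1 = t * p1 := by
    rw [ht]; field_simp
    linear_combination p0 * cross
  have factored : (t - 1) * (t*(p0^2 + p1^2) - 1) = 0 := by
    rw [hq0, hq1] at f1
    linear_combination t * e1 - f1
  rcases mul_eq_zero.mp factored with h | h
  · have ht1 : t = 1 := by linarith
    rw [ht1, one_mul] at hq0 hq1
    exact ⟨hq0.symm, hq1.symm⟩
  · exfalso
    have htp : t * (p0^2 + p1^2) = 1 := by linarith
    have hqsum : q0^2 + q1^2 = t^2 * (p0^2 + p1^2) := by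
      rw [hq0, hq1]; ring
    have hqt : q0^2 + q1^2 = t := by linear_combination hqsum + t * htp
    have htne : t ≠ 0 := by
      intro h0
      rw [h0, zero_mul] at htp
      exact one_ne_zero htp.symm
    have htpos : 0 < t := lt_of_le_of_ne (by linarith [sq_nonneg q0, sq_nonneg q1, hqt]) (Ne.symm htne)
    have h1t : t * (p0^2 + p1^2) < t * 1 := by
      exact mul_lt_mul_of_pos_left hp htpos
    rw [mul_one] at h1t
    linarith

/-- Two distinct circles both orthogonal to the unit circle (a circle with center `m` and
radius `ρ > 0` is orthogonal to the unit circle iff `‖m‖² = 1 + ρ²`) intersect in at most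
one point inside the open unit disk. -/
theorem orthogonal_circles_at_most_one_intersection_in_unit_disk
    (m₁ m₂ : EuclideanSpace ℝ (Fin 2)) (ρ₁ ρ₂ : ℝ) (h₁ : 0 < ρ₁) (h₂ : 0 < ρ₂)
    (ho₁ : ‖m₁‖ ^ 2 = 1 + ρ₁ ^ 2) (ho₂ : ‖m₂‖ ^ 2 = 1 + ρ₂ ^ 2)
    (hne : {p : EuclideanSpace ℝ (Fin 2) | dist p m₁ = ρ₁} ≠ {p | dist p m₂ = ρ₂}) :
    ({p : EuclideanSpace ℝ (Fin 2) | dist p m₁ = ρ₁} ∩ {p | dist p m₂ = ρ₂} ∩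
      {p | ‖p‖ < 1}).Subsingleton := by
  have normsq : ∀ x : EuclideanSpace ℝ (Fin 2), ‖x‖^2 = (x 0)^2 + (x 1)^2 := by
    intro x
    rw [EuclideanSpace.norm_eq, Real.sq_sqrt (by positivity)]
    simp [Fin.sum_univ_two]
  have distsq : ∀ x y : EuclideanSpace ℝ (Fin 2),
      (dist x y)^2 = (x 0 - y 0)^2 + (x 1 - y 1)^2 := by
    intro x y
    rw [EuclideanSpace.dist_eq, Real.sq_sqrt (by positivity)]
    simp [Fin.sum_univ_two, Real.dist_eq, sq_abs]
  -- centers differ in some coordinate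
  have hd : ¬(m₁ 0 = m₂ 0 ∧ m₁ 1 = m₂ 1) := by
    rintro ⟨hm0, hm1⟩
    have hm : m₁ = m₂ := by
      ext i; fin_cases i <;> assumption
    have hρ : ρ₁ = ρ₂ := by
      have : 1 + ρ₁^2 = 1 + ρ₂^2 := by rw [← ho₁, ← ho₂, hm]
      nlinarith
    exact hne (by rw [hm, hρ])
  rintro p ⟨⟨hp1, hp2⟩, hp3⟩ q ⟨⟨hq1, hq2⟩, hq3⟩
  simp only [Set.mem_setOf_eq] at hp1 hp2 hp3 hq1 hq2 hq3
  have H1 : (p 0 - m₁ 0)^2 + (p 1 - m₁ 1)^2 = ρ₁^2 := by rw [← distsq, hp1]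
  have H2 : (p 0 - m₂ 0)^2 + (p 1 - m₂ 1)^2 = ρ₂^2 := by rw [← distsq, hp2]
  have H3 : (q 0 - m₁ 0)^2 + (q 1 - m₁ 1)^2 = ρ₁^2 := by rw [← distsq, hq1]
  have H4 : (q 0 - m₂ 0)^2 + (q 1 - m₂ 1)^2 = ρ₂^2 := by rw [← distsq, hq2]
  have O1 : (m₁ 0)^2 + (m₁ 1)^2 = 1 + ρ₁^2 := by rw [← normsq, ho₁]
  have O2 : (m₂ 0)^2 + (m₂ 1)^2 = 1 + ρ₂^2 := by rw [← normsq, ho₂]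
  have HP : (p 0)^2 + (p 1)^2 < 1 := by
    rw [← normsq]; nlinarith [norm_nonneg p]
  have HQ : (q 0)^2 + (q 1)^2 < 1 := by
    rw [← normsq]; nlinarith [norm_nonneg q]
  obtain ⟨c0, c1⟩ := ortho_key (m₁ 0) (m₁ 1) (m₂ 0) (m₂ 1) (p 0) (p 1) (q 0) (q 1)
    ρ₁ ρ₂ H1 H2 H3 H4 O1 O2 HP HQ hd
  ext i; fin_cases i
  · exact c0
  · exact c1
end
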